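/- arXiv:2405.16427 — 5 statements merged into one kernel-verified Lean document; each statement's English description precedes it below -/
import Mathlib

section
/- Let G be a finite group, d ≥ d(G), and let g be a non-isolated vertex of Γ_d(G) (i.e. g lies in some generating set of size d). Then for every z ∈ G, the element g^z = z⁻¹gz lies in the same connected component of Γ_d(G) as g. -/
/-- The graph `Γ_d(G)`: distinct `x, y` are adjacent iff some generating set of
cardinality `d` contains both. -/
def genGraph (G : Type*) [Group G] (d : ℕ) : SimpleGraph G where
  Adj x y := x ≠ y ∧ ∃ s : Finset G,
    s.card = d ∧ x ∈ s ∧ y ∈ s ∧ Subgroup.closure (s : Set G) = ⊤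
  symm := by
    constructor
    rintro x y ⟨hxy, s, h1, h2, h3, h4⟩
    exact ⟨hxy.symm, s, h1, h3, h2, h4⟩
  loopless := by constructor; rintro x ⟨hx, -⟩; exact hx rfl

/-- A vertex of `Γ_d(G)` is non-isolated if it has a neighbour. -/
def NonIsolated (G : Type*) [Group G] (d : ℕ) (x : G) : Prop :=
  ∃ y, (genGraph G d).Adj x y

/-- `Δ_d(G)`: the subgraph of `Γ_d(G)` induced on the non-isolated vertices. -/
def deltaGraph (G : Type*) [Group G] (d : ℕ) :
    SimpleGraph {x : G // NonIsolated G d x} :=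
  (genGraph G d).comap Subtype.val

/-- `d(G)`: the minimal cardinality of a generating set of `G`. -/
noncomputable def minGen (G : Type*) [Group G] : ℕ :=
  sInf {n : ℕ | ∃ f : Fin n → G, Subgroup.closure (Set.range f) = ⊤}

section aux
variable {G : Type*} [Group G] {d : ℕ}

lemma conj_inj (w : G) : Function.Injective (fun x : G => w⁻¹ * x * w) := by
  intro a b h
  simpa using h

lemma closure_conj [DecidableEq G] {s : Finset G} (hs : Subgroup.closure (s : Set G) = ⊤) (w : G) :
    Subgroup.closure ((s.image (fun x => w⁻¹ * x * w) : Finset G) : Set G) = ⊤ := by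
  have hf : ((s.image (fun x => w⁻¹ * x * w) : Finset G) : Set G)
      = ((MulAut.conj w⁻¹).toMonoidHom) '' (s : Set G) := by
    simp [Finset.coe_image]
    congr 1
  rw [hf, ← MonoidHom.map_closure, hs]
  exact Subgroup.map_top_of_surjective _ (MulAut.conj w⁻¹).surjective

lemma adj_conj {x y : G} (w : G) (h : (genGraph G d).Adj x y) :
    (genGraph G d).Adj (w⁻¹ * x * w) (w⁻¹ * y * w) := by
  classical
  obtain ⟨hxy, s, h1, h2, h3, h4⟩ := h
  refine ⟨fun h => hxy (conj_inj w h), s.image (fun x => w⁻¹ * x * w),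
    ?_, Finset.mem_image_of_mem _ h2, Finset.mem_image_of_mem _ h3, closure_conj h4 w⟩
  rw [Finset.card_image_of_injective _ (conj_inj w), h1]

lemma reach_conj {x y : G} (w : G) (h : (genGraph G d).Reachable x y) :
    (genGraph G d).Reachable (w⁻¹ * x * w) (w⁻¹ * y * w) := by
  exact h.map ⟨fun x => w⁻¹ * x * w, fun a => adj_conj w a⟩

lemma reach_gen {g t : G} {s : Finset G} (hcard : s.card = d) (hg : g ∈ s) (ht : t ∈ s)
    (hcl : Subgroup.closure (s : Set G) = ⊤) :
    (genGraph G d).Reachable g (t⁻¹ * g * t) := by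
  classical
  by_cases hgt : g = t
  · subst hgt
    have e : g⁻¹ * g * g = g := by group
    rw [e]
  have hA : (genGraph G d).Adj g t := ⟨hgt, s, hcard, hg, ht, hcl⟩
  by_cases h2 : t = t⁻¹ * g * t
  · refine hA.reachable.trans ?_
    rw [← h2]
  · have hB : (genGraph G d).Adj t (t⁻¹ * g * t) :=
      ⟨h2, s.image (fun x => t⁻¹ * x * t),
        by rw [Finset.card_image_of_injective _ (conj_inj t), hcard],
        Finset.mem_image.2 ⟨t, ht, by group⟩,
        Finset.mem_image_of_mem _ hg, closure_conj hcl t⟩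
    exact hA.reachable.trans hB.reachable

end aux

theorem stmt1 (G : Type*) [Group G] [Finite G] (d : ℕ) (hd : minGen G ≤ d)
    (g : G) (hg : NonIsolated G d g) (z : G) :
    (genGraph G d).Reachable g (z⁻¹ * g * z) := by
  obtain ⟨y, hxy, s, hcard, hgs, hys, hcl⟩ := hg
  have hz : z ∈ Subgroup.closure (s : Set G) := by rw [hcl]; trivial
  induction hz using Subgroup.closure_induction with
  | mem t ht => exact reach_gen hcard hgs ht hcl
  | one => simpa using SimpleGraph.Reachable.refl g
  | mul a b ha hb iha ihb =>
      have h := ihb.trans (reach_conj (d := d) b iha)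
      have e : b⁻¹ * (a⁻¹ * g * a) * b = (a * b)⁻¹ * g * (a * b) := by group
      rwa [e] at h
  | inv a ha iha =>
      have h := reach_conj (d := d) a⁻¹ iha
      have e : a⁻¹⁻¹ * (a⁻¹ * g * a) * a⁻¹ = g := by group
      rw [e] at h
      exact h.symm
end

section
/- Let M be a normal subgroup of a finite group G, d ≥ d(G), and let x, y be non-isolated vertices of Γ_d(G). If the cosets xM and yM lie in the same connected component of Γ_d(G/M), then there exists m ∈ M such that x and ym lie in the same connected component of Γ_d(G). -/
open Subgroup

section Gaschutz

attribute [local instance] Classical.propDecidable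

variable {G : Type*} [Group G]

/-- The set of `M`-perturbations `n` of the tuple `g` such that `g·n` together with `X`
generates exactly `H`. -/
noncomputable def Tset [Fintype G] (N : Subgroup G) (X : Set G) {r : ℕ}
    (g : Fin r → G) (H : Subgroup G) : Finset (Fin r → ↥N) :=
  Finset.univ.filter fun n =>
    Subgroup.closure (Set.range (fun i => g i * (n i : G)) ∪ X) = H

lemma card_filter_mul_mem [Fintype G] (N H : Subgroup G) (g : G)
    (h : ∃ n ∈ N, g * n ∈ H) :
    (Finset.univ.filter fun n : ↥N => g * (n : G) ∈ H).card
      = (Finset.univ.filter fun n : ↥N => (n : G) ∈ H).card := by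
  obtain ⟨n₀, hn₀, hgn₀⟩ := h
  apply Finset.card_bij (fun n _ => ((⟨n₀, hn₀⟩ : ↥N)⁻¹ * n : ↥N))
  · intro a ha
    simp only [Finset.mem_filter, Finset.mem_univ, true_and] at ha ⊢
    have : ((⟨n₀, hn₀⟩ : ↥N)⁻¹ * a : ↥N) = ((g * n₀)⁻¹ * (g * a) : G) := by
      push_cast; group
    rw [this]
    exact H.mul_mem (H.inv_mem hgn₀) ha
  · intro a _ b _ hab
    exact mul_left_cancel hab
  · intro b hb
    simp only [Finset.mem_filter, Finset.mem_univ, true_and] at hb ⊢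
    refine ⟨(⟨n₀, hn₀⟩ : ↥N) * b, ?_, by group⟩
    have : (g * ((⟨n₀, hn₀⟩ : ↥N) * b : ↥N) : G) = (g * n₀) * b := by
      push_cast; group
    rw [this]
    exact H.mul_mem hgn₀ hb

lemma sum_Tset [Fintype G] [Fintype (Subgroup G)] (N : Subgroup G) (X : Set G) {r : ℕ}
    (g : Fin r → G) (H : Subgroup G) (hX : X ⊆ ↑H)
    (hco : ∀ i, ∃ n ∈ N, g i * n ∈ H) :
    ∑ K ∈ Finset.univ.filter (· ≤ H), (Tset N X g K).card
      = (Finset.univ.filter fun n : ↥N => (n : G) ∈ H).card ^ r := by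
  set Ω : Finset (Fin r → ↥N) :=
    Fintype.piFinset (fun i => Finset.univ.filter fun n : ↥N => g i * (n : G) ∈ H) with hΩ
  have hcardΩ : Ω.card = (Finset.univ.filter fun n : ↥N => (n : G) ∈ H).card ^ r := by
    rw [hΩ, Fintype.card_piFinset]
    rw [Finset.prod_congr rfl fun i _ => card_filter_mul_mem N H (g i) (hco i)]
    simp
  have hfib : Ω.card = ∑ K ∈ Finset.univ.filter (· ≤ H),
      (Ω.filter (fun n => Subgroup.closure (Set.range (fun i => g i * (n i : G)) ∪ X) = K)).card := by
    apply Finset.card_eq_sum_card_fiberwise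
    intro n hn
    simp only [Finset.mem_coe, Finset.mem_filter, Finset.mem_univ, true_and]
    rw [Subgroup.closure_le]
    refine Set.union_subset ?_ hX
    rintro - ⟨i, rfl⟩
    have := Fintype.mem_piFinset.mp hn i
    simp only [Finset.mem_filter, Finset.mem_univ, true_and] at this
    exact this
  rw [← hcardΩ, hfib]
  apply Finset.sum_congr rfl
  intro K hK
  simp only [Finset.mem_filter, Finset.mem_univ, true_and] at hK
  congr 1
  ext n
  simp only [Finset.mem_filter, Tset, Finset.mem_univ, true_and, hΩ, Fintype.mem_piFinset]
  constructor
  · intro hcl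
    refine ⟨fun i => ?_, hcl⟩
    have : g i * (n i : G) ∈ Subgroup.closure (Set.range (fun i => g i * (n i : G)) ∪ X) :=
      Subgroup.subset_closure (Set.mem_union_left _ ⟨i, rfl⟩)
    rw [hcl] at this
    exact hK this
  · rintro ⟨-, h⟩; exact h

lemma Tset_eq_empty [Fintype G] (N : Subgroup G) (X : Set G) {r : ℕ}
    (g : Fin r → G) (hg : closure (Set.range g ∪ X) ⊔ N = ⊤) (K : Subgroup G)
    (hK : ¬ (X ⊆ ↑K ∧ K ⊔ N = ⊤)) : Tset N X g K = ∅ := by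
  rw [Finset.eq_empty_iff_forall_notMem]
  intro n hn
  simp only [Tset, Finset.mem_filter, Finset.mem_univ, true_and] at hn
  apply hK
  constructor
  · rw [← hn]; exact (Set.subset_union_right).trans Subgroup.subset_closure
  · rw [← top_le_iff, ← hg, sup_le_iff]
    constructor
    · rw [Subgroup.closure_le]
      apply Set.union_subset
      · rintro - ⟨i, rfl⟩
        have h1 : g i * (n i : G) ∈ K ⊔ N := by
          apply le_sup_left (α := Subgroup G)
          rw [← hn]
          exact Subgroup.subset_closure (Set.mem_union_left _ ⟨i, rfl⟩)
        have h2 : ((n i : G))⁻¹ ∈ (K ⊔ N : Subgroup G) :=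
          le_sup_right (α := Subgroup G) (N.inv_mem (n i).2)
        have := Subgroup.mul_mem _ h1 h2
        simpa using this
      · intro a ha
        have : a ∈ K := by
          rw [← hn]; exact Subgroup.subset_closure (Set.mem_union_right _ ha)
        exact le_sup_left (α := Subgroup G) this
    · exact le_sup_right
  -- done

lemma Tset_card_indep [Fintype G] [Fintype (Subgroup G)] (N : Subgroup G) [N.Normal]
    (X : Set G) {r : ℕ} :
    ∀ (H : Subgroup G), X ⊆ ↑H → H ⊔ N = ⊤ →
    ∀ g g' : Fin r → G, closure (Set.range g ∪ X) ⊔ N = ⊤ →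
      closure (Set.range g' ∪ X) ⊔ N = ⊤ →
      (Tset N X g H).card = (Tset N X g' H).card := by
  suffices h : ∀ (c : ℕ) (H : Subgroup G), Nat.card ↥H ≤ c → X ⊆ ↑H → H ⊔ N = ⊤ →
      ∀ g g' : Fin r → G, closure (Set.range g ∪ X) ⊔ N = ⊤ →
      closure (Set.range g' ∪ X) ⊔ N = ⊤ →
      (Tset N X g H).card = (Tset N X g' H).card by
    intro H; exact h (Nat.card ↥H) H le_rfl
  intro c
  induction c with
  | zero =>
    intro H hc
    exfalso
    have : 0 < Nat.card ↥H := Nat.card_pos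
    omega
  | succ c ih =>
    intro H hc hX hsup g g' hg hg'
    have hco : ∀ (gg : Fin r → G) (i : Fin r), ∃ n ∈ N, gg i * n ∈ H := by
      intro gg i
      have hmem : gg i ∈ (↑(H ⊔ N) : Set G) := by rw [hsup]; simp
      rw [Subgroup.mul_normal H N] at hmem
      obtain ⟨h, hh, n, hn, heq⟩ := hmem
      have heq' : h * n = gg i := heq
      refine ⟨n⁻¹, N.inv_mem hn, ?_⟩
      have : gg i * n⁻¹ = h := by rw [← heq']; group
      rw [this]; exact hh
    have hsum := sum_Tset N X g H hX (hco g)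
    have hsum' := sum_Tset N X g' H hX (hco g')
    have hHmem : H ∈ Finset.univ.filter (· ≤ H) := by simp
    rw [← Finset.sum_erase_add _ _ hHmem] at hsum hsum'
    have herase : ∀ K ∈ (Finset.univ.filter (· ≤ H)).erase H,
        (Tset N X g K).card = (Tset N X g' K).card := by
      intro K hK
      rw [Finset.mem_erase, Finset.mem_filter] at hK
      have hKlt : K < H := lt_of_le_of_ne hK.2.2 hK.1
      by_cases hKc : X ⊆ ↑K ∧ K ⊔ N = ⊤
      · have hcard : Nat.card ↥K ≤ c := by
          have h1 : Nat.card ↥K < Nat.card ↥H := by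
            have h2 : Nat.card (↑K : Set G) < Nat.card (↑H : Set G) := by
              rw [Nat.card_coe_set_eq, Nat.card_coe_set_eq]
              exact Set.ncard_lt_ncard (SetLike.coe_ssubset_coe.mpr hKlt) (Set.toFinite _)
            simpa using h2
          omega
        exact ih K hcard hKc.1 hKc.2 g g' hg hg'
      · rw [Tset_eq_empty N X g hg K hKc, Tset_eq_empty N X g' hg' K hKc]
    rw [Finset.sum_congr rfl herase] at hsum
    omega

lemma gaschutz [Finite G] (N : Subgroup G) [N.Normal] (X : Set G) {r : ℕ}
    (g y : Fin r → G) (hy : closure (Set.range y ∪ X) = ⊤)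
    (hg : closure (Set.range g ∪ X) ⊔ N = ⊤) :
    ∃ n : Fin r → G, (∀ i, n i ∈ N) ∧
      closure (Set.range (fun i => g i * n i) ∪ X) = ⊤ := by
  cases nonempty_fintype G
  haveI : Fintype (Subgroup G) := Fintype.ofFinite _
  have key := Tset_card_indep N X ⊤ (by simp) (by simp) g y hg (by rw [hy]; simp)
  have hne : (Tset N X y ⊤).Nonempty := by
    refine ⟨fun _ => 1, ?_⟩
    simp only [Tset, Finset.mem_filter, Finset.mem_univ, true_and]
    simpa using hy
  have : (Tset N X g ⊤).Nonempty := by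
    rw [← Finset.card_pos, key, Finset.card_pos]
    exact hne
  obtain ⟨n, hn⟩ := this
  simp only [Tset, Finset.mem_filter, Finset.mem_univ, true_and] at hn
  exact ⟨fun i => (n i : G), fun i => (n i).2, hn⟩

end Gaschutz

lemma sup_eq_top_iff_map {G : Type*} [Group G] (M : Subgroup G) [M.Normal] (K : Subgroup G) :
    K ⊔ M = ⊤ ↔ K.map (QuotientGroup.mk' M) = ⊤ := by
  have h1 : Subgroup.comap (QuotientGroup.mk' M) (Subgroup.map (QuotientGroup.mk' M) K)
      = K ⊔ M := by
    rw [Subgroup.comap_map_eq, QuotientGroup.ker_mk']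
  constructor
  · intro h
    rw [← top_le_iff]
    rintro q -
    obtain ⟨x, rfl⟩ := QuotientGroup.mk'_surjective M q
    have : x ∈ Subgroup.comap (QuotientGroup.mk' M) (Subgroup.map (QuotientGroup.mk' M) K) := by
      rw [h1, h]; trivial
    exact this
  · intro h
    rw [← h1, h, Subgroup.comap_top]

lemma step_adj {G : Type*} [Group G] [Finite G] (M : Subgroup G) [M.Normal] (d : ℕ)
    (g : G) (hg : NonIsolated G d g) {zb : G ⧸ M}
    (hadj : (genGraph (G ⧸ M) d).Adj (g : G ⧸ M) zb) :
    ∃ z : G, (z : G ⧸ M) = zb ∧ (genGraph G d).Adj g z := by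
  classical
  obtain ⟨hne, s, hscard, hgs, hzs, hsgen⟩ := hadj
  have hd0 : 0 < d := hscard ▸ Finset.card_pos.mpr ⟨_, hgs⟩
  set t : Finset (G ⧸ M) := s.erase (g : G ⧸ M) with ht
  have hzt : zb ∈ t := Finset.mem_erase.mpr ⟨hne.symm, hzs⟩
  have htcard : t.card = d - 1 := by rw [ht, Finset.card_erase_of_mem hgs, hscard]
  set w : Fin t.card → G ⧸ M := fun i => ((t.equivFin.symm i : {x // x ∈ t}) : G ⧸ M) with hw
  have hwmem : ∀ i, w i ∈ t := fun i => (t.equivFin.symm i).2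
  have hwinj : Function.Injective w := fun i j hij =>
    t.equivFin.symm.injective (Subtype.ext hij)
  have hwrange : Set.range w = ↑t := by
    apply Set.eq_of_subset_of_subset
    · rintro - ⟨i, rfl⟩; exact hwmem i
    · intro a ha
      exact ⟨t.equivFin ⟨a, ha⟩, by simp [hw]⟩
  set i₀ := t.equivFin ⟨zb, hzt⟩ with hi₀
  have hwi₀ : w i₀ = zb := by simp [hw, hi₀]
  set q : Fin t.card → G := fun i => (w i).out with hq
  have hqw : ∀ i, ((q i : G) : G ⧸ M) = w i := fun i => QuotientGroup.out_eq' _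
  -- the lifted tuple generates together with M
  have hcond : closure (Set.range q ∪ {g}) ⊔ M = ⊤ := by
    rw [sup_eq_top_iff_map, MonoidHom.map_closure]
    have himg : (QuotientGroup.mk' M) '' (Set.range q ∪ {g}) = ↑s := by
      rw [Set.image_union, ← Set.range_comp]
      have h1 : (QuotientGroup.mk' M) ∘ q = w := funext hqw
      have h2 : (QuotientGroup.mk' M) '' {g} = {((g : G ⧸ M))} := by simp
      have hsub : {(g : G ⧸ M)} ⊆ (↑s : Set (G ⧸ M)) := by simpa using hgs
      rw [h1, h2, hwrange, ht, Finset.coe_erase, Set.diff_union_of_subset hsub]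
    rw [himg, hsgen]
  -- the witness tuple from non-isolation of g
  obtain ⟨g₂, hne2, u, hucard, hgu, -, hugen⟩ := hg
  have hcc : t.card = (u.erase g).card := by
    rw [htcard, Finset.card_erase_of_mem hgu, hucard]
  set yy : Fin t.card → G :=
    fun i => (((u.erase g).equivFin.symm (Fin.cast hcc i) : {x // x ∈ u.erase g}) : G) with hyy
  have hyrange : Set.range yy = ↑(u.erase g) := by
    apply Set.eq_of_subset_of_subset
    · rintro - ⟨i, rfl⟩; exact ((u.erase g).equivFin.symm (Fin.cast hcc i)).2
    · intro a ha
      refine ⟨(Fin.cast hcc.symm) ((u.erase g).equivFin ⟨a, ha⟩), ?_⟩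
      simp [hyy]
  have hygen : closure (Set.range yy ∪ {g}) = ⊤ := by
    have hsub : {g} ⊆ (↑u : Set G) := by simpa using hgu
    rw [hyrange, Finset.coe_erase, Set.diff_union_of_subset hsub, hugen]
  obtain ⟨n, hnM, hngen⟩ := gaschutz M {g} q yy hygen hcond
  set f : Fin t.card → G := fun i => q i * n i with hf
  have hfmk : ∀ i, ((f i : G) : G ⧸ M) = w i := by
    intro i
    have h1 : ((n i : G) : G ⧸ M) = 1 := (QuotientGroup.eq_one_iff _).mpr (hnM i)
    show ((q i * n i : G) : G ⧸ M) = w i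
    rw [QuotientGroup.mk_mul, h1, mul_one]
    exact hqw i
  have hfinj : Function.Injective f := fun i j hij => hwinj (by rw [← hfmk, ← hfmk, hij])
  set s' : Finset G := insert g (Finset.image f Finset.univ) with hs'
  have hgnot : g ∉ Finset.image f Finset.univ := by
    intro hmem
    obtain ⟨i, -, hi⟩ := Finset.mem_image.mp hmem
    have : (g : G ⧸ M) ∈ t := by rw [← hi, hfmk i]; exact hwmem i
    exact Finset.notMem_erase _ _ this
  have hs'card : s'.card = d := by
    rw [hs', Finset.card_insert_of_notMem hgnot,
      Finset.card_image_of_injective _ hfinj, Finset.card_univ, Fintype.card_fin, htcard]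
    omega
  have hs'gen : closure (↑s' : Set G) = ⊤ := by
    have : (↑s' : Set G) = Set.range f ∪ {g} := by
      rw [hs', Finset.coe_insert, Finset.coe_image, Finset.coe_univ, Set.image_univ,
        Set.insert_eq, Set.union_comm]
    rw [this]
    exact hngen
  refine ⟨f i₀, by rw [hfmk, hwi₀], ?_, s', hs'card, Finset.mem_insert_self _ _,
    Finset.mem_insert_of_mem (Finset.mem_image.mpr ⟨i₀, Finset.mem_univ _, rfl⟩), hs'gen⟩
  intro hgz
  exact hne (by rw [hgz, hfmk, hwi₀])

lemma walk_lift {G : Type*} [Group G] [Finite G] (M : Subgroup G) [M.Normal] (d : ℕ)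
    {a b : G ⧸ M} (p : (genGraph (G ⧸ M) d).Walk a b) :
    ∀ (g : G), (g : G ⧸ M) = a → NonIsolated G d g →
      ∃ z : G, (z : G ⧸ M) = b ∧ (genGraph G d).Reachable g z := by
  induction p with
  | nil => exact fun g hga _ => ⟨g, hga, SimpleGraph.Reachable.refl g⟩
  | cons h p ih =>
    intro g hga hgni
    obtain ⟨z₁, hz₁, hadj⟩ := step_adj M d g hgni (hga ▸ h)
    obtain ⟨z, hz, hr⟩ := ih z₁ hz₁ ⟨g, hadj.symm⟩
    exact ⟨z, hz, hadj.reachable.trans hr⟩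

theorem stmt3 (G : Type*) [Group G] [Finite G] (M : Subgroup G) [M.Normal]
    (d : ℕ) (hd : minGen G ≤ d) (x y : G)
    (hx : NonIsolated G d x) (hy : NonIsolated G d y)
    (h : (genGraph (G ⧸ M) d).Reachable (x : G ⧸ M) (y : G ⧸ M)) :
    ∃ m ∈ M, (genGraph G d).Reachable x (y * m) := by
  obtain ⟨p⟩ := h
  obtain ⟨z, hz, hr⟩ := walk_lift M d p x rfl hx
  refine ⟨y⁻¹ * z, QuotientGroup.eq.mp hz.symm, ?_⟩
  rw [mul_inv_cancel_left]
  exact hr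
end

section
/- Let G be a finite group, X ⊆ G, M ⊴ G, and suppose ⟨g₁,...,g_r⟩ together with X and M generates G. If r ≥ d_X(G), the minimal number of elements of G generating G together with X, then there exist n₁,...,n_r ∈ M such that ⟨g₁n₁,...,g_r n_r⟩ together with X generates G. -/
set_option linter.unusedSectionVars false
open Finset
open scoped Pointwise

attribute [local instance] Classical.propDecidable

section Gaschutz

variable {G : Type*} [Group G] [Fintype G] (X : Set G) (M : Subgroup G) {r : ℕ}

noncomputable local instance : Fintype (Subgroup G) := Fintype.ofFinite _

/-- tuples m ∈ M^r with g_i m_i all in H -/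
noncomputable def ASet (g : Fin r → G) (H : Subgroup G) : Finset (Fin r → G) :=
  Finset.univ.filter fun m => (∀ i, m i ∈ M) ∧ ∀ i, g i * m i ∈ H

/-- tuples m ∈ M^r with ⟨X, g·m⟩ = H -/
noncomputable def BSet (g : Fin r → G) (H : Subgroup G) : Finset (Fin r → G) :=
  Finset.univ.filter fun m =>
    (∀ i, m i ∈ M) ∧ Subgroup.closure (X ∪ Set.range fun i => g i * m i) = H

lemma closure_mul_mem (g m : Fin r → G) (hm : ∀ i, m i ∈ M) :
    Subgroup.closure (X ∪ (Set.range fun i => g i * m i) ∪ (M : Set G)) =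
      Subgroup.closure (X ∪ Set.range g ∪ (M : Set G)) := by
  apply le_antisymm <;> apply Subgroup.closure_le _ |>.2 <;> intro x hx
  · rcases hx with (hx | ⟨i, rfl⟩) | hx
    · exact Subgroup.subset_closure (Or.inl (Or.inl hx))
    · exact mul_mem (Subgroup.subset_closure (Or.inl (Or.inr ⟨i, rfl⟩)))
        (Subgroup.subset_closure (Or.inr (hm i)))
    · exact Subgroup.subset_closure (Or.inr hx)
  · rcases hx with (hx | ⟨i, rfl⟩) | hx
    · exact Subgroup.subset_closure (Or.inl (Or.inl hx))
    · have : g i = (g i * m i) * (m i)⁻¹ := by group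
      rw [this]
      exact mul_mem (Subgroup.subset_closure (Or.inl (Or.inr ⟨i, rfl⟩)))
        (inv_mem (Subgroup.subset_closure (Or.inr (hm i))))
    · exact Subgroup.subset_closure (Or.inr hx)

lemma BSet_nonempty_cond {g : Fin r → G} {H : Subgroup G}
    (hgen : Subgroup.closure (X ∪ Set.range g ∪ (M : Set G)) = ⊤)
    (hne : (BSet X M g H).Nonempty) : X ⊆ H ∧ H ⊔ M = ⊤ := by
  obtain ⟨m, hm⟩ := hne
  rw [BSet, mem_filter] at hm
  obtain ⟨-, hmM, hcl⟩ := hm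
  constructor
  · intro x hx
    rw [← hcl]
    exact Subgroup.subset_closure (Or.inl hx)
  · rw [← top_le_iff, ← hgen, ← closure_mul_mem X M g m hmM]
    apply (Subgroup.closure_le _).2
    rintro x ((hx | hx) | hx)
    · exact Subgroup.mem_sup_left (hcl ▸ Subgroup.subset_closure (Or.inl hx) : x ∈ H)
    · exact Subgroup.mem_sup_left (hcl ▸ Subgroup.subset_closure (Or.inr hx) : x ∈ H)
    · exact Subgroup.mem_sup_right hx

lemma ASet_card [M.Normal] (g : Fin r → G) (H : Subgroup G)
    (hHM : H ⊔ M = ⊤) :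
    (ASet M g H).card = (Nat.card ↥(H ⊓ M)) ^ r := by
  -- decompose g i = h i * a i
  have hdec : ∀ i, ∃ h ∈ H, ∃ a ∈ M, g i = h * a := by
    intro i
    have : g i ∈ ((H : Set G) * (M : Set G)) := by
      rw [← Subgroup.mul_normal, hHM]; trivial
    obtain ⟨h, hh, a, ha, hha⟩ := this
    exact ⟨h, hh, a, ha, hha.symm⟩
  choose h hh a ha hga using hdec
  have : ASet M g H = Fintype.piFinset fun i =>
      Finset.univ.filter fun x => x ∈ M ∧ g i * x ∈ H := by
    ext m
    simp [ASet, Fintype.mem_piFinset, forall_and]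
  rw [this, Fintype.card_piFinset]
  have hcard : ∀ i, (Finset.univ.filter fun x => x ∈ M ∧ g i * x ∈ H).card =
      Nat.card ↥(H ⊓ M) := by
    intro i
    rw [Nat.card_eq_fintype_card, Fintype.card_subtype]
    apply Finset.card_bij' (fun x _ => a i * x) (fun k _ => (a i)⁻¹ * k)
    · intro x hx
      simp only [mem_filter, mem_univ, true_and] at hx
      simp only [mem_filter, mem_univ, true_and, Subgroup.mem_inf]
      refine ⟨?_, mul_mem (ha i) hx.1⟩
      have : g i * x = h i * (a i * x) := by rw [hga i]; group
      have h2 : h i * (a i * x) ∈ H := this ▸ hx.2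
      have := mul_mem (inv_mem (hh i)) h2
      simpa using this
    · intro k hk
      simp only [mem_filter, mem_univ, true_and, Subgroup.mem_inf] at hk
      simp only [mem_filter, mem_univ, true_and]
      refine ⟨mul_mem (inv_mem (ha i)) hk.2, ?_⟩
      have : g i * ((a i)⁻¹ * k) = h i * k := by rw [hga i]; group
      rw [this]
      exact mul_mem (hh i) hk.1
    · intro x _; group
    · intro k _; group
  simp [Finset.prod_congr rfl fun i _ => hcard i]

lemma ASet_eq_sum (g : Fin r → G) (H : Subgroup G) (hXH : X ⊆ H) :
    (ASet M g H).card =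
      ∑ K ∈ Finset.univ.filter (· ≤ H), (BSet X M g K).card := by
  rw [Finset.card_eq_sum_card_fiberwise
    (f := fun m => Subgroup.closure (X ∪ Set.range fun i => g i * m i))
    (t := Finset.univ.filter (· ≤ H))]
  · apply Finset.sum_congr rfl
    intro K hK
    simp only [mem_filter, mem_univ, true_and] at hK
    congr 1
    ext m
    simp only [ASet, BSet, mem_filter, mem_univ, true_and]
    constructor
    · rintro ⟨⟨hmM, -⟩, hcl⟩; exact ⟨hmM, hcl⟩
    · rintro ⟨hmM, hcl⟩
      refine ⟨⟨hmM, fun i => hK ?_⟩, hcl⟩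
      rw [← hcl]
      exact Subgroup.subset_closure (Or.inr ⟨i, rfl⟩)
  · intro m hm
    simp only [ASet, Finset.mem_coe, mem_filter, mem_univ, true_and] at hm
    simp only [Finset.mem_coe, mem_filter, mem_univ, true_and]
    apply (Subgroup.closure_le _).2
    rintro x (hx | ⟨i, rfl⟩)
    · exact hXH hx
    · exact hm.2 i

/-- The key counting lemma: the number of M-perturbations m with ⟨X, g·m⟩ = H
does not depend on g (among tuples generating G together with X and M). -/
lemma BSet_card_eq [M.Normal] (H : Subgroup G) :
    ∀ g g' : Fin r → G,
      Subgroup.closure (X ∪ Set.range g ∪ (M : Set G)) = ⊤ →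
      Subgroup.closure (X ∪ Set.range g' ∪ (M : Set G)) = ⊤ →
      (BSet X M g H).card = (BSet X M g' H).card := by
  induction H using WellFoundedLT.induction with
  | _ H IH =>
    intro g g' hg hg'
    by_cases hcond : X ⊆ H ∧ H ⊔ M = ⊤
    · -- use the partition identity
      have key : ∀ k : Fin r → G,
          Subgroup.closure (X ∪ Set.range k ∪ (M : Set G)) = ⊤ →
          (Nat.card ↥(H ⊓ M)) ^ r =
            (BSet X M k H).card + ∑ K ∈ Finset.univ.filter (· < H), (BSet X M k K).card := by
        intro k hk
        rw [← ASet_card M k H hcond.2, ASet_eq_sum X M k H hcond.1]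
        have hsplit : Finset.univ.filter (· ≤ H) =
            insert H (Finset.univ.filter (· < H)) := by
          ext K
          simp only [mem_filter, mem_univ, true_and, mem_insert]
          rw [le_iff_lt_or_eq]
          tauto
        rw [hsplit, Finset.sum_insert (by simp)]
      have h1 := key g hg
      have h2 := key g' hg'
      have hsum : ∑ K ∈ Finset.univ.filter (· < H), (BSet X M g K).card =
          ∑ K ∈ Finset.univ.filter (· < H), (BSet X M g' K).card := by
        apply Finset.sum_congr rfl
        intro K hK
        simp only [mem_filter, mem_univ, true_and] at hK
        exact IH K hK g g' hg hg'
      omega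
    · -- both sides are empty
      have hzero : ∀ k : Fin r → G,
          Subgroup.closure (X ∪ Set.range k ∪ (M : Set G)) = ⊤ →
          (BSet X M k H).card = 0 := by
        intro k hk
        rw [Finset.card_eq_zero]
        by_contra hne
        exact hcond (BSet_nonempty_cond X M hk ⟨_, Finset.nonempty_of_ne_empty hne |>.choose_spec⟩)
      rw [hzero g hg, hzero g' hg']

end Gaschutz

/-- `d_X(G)`: the smallest number of elements of `G` generating `G` together
with the elements of `X`. -/
noncomputable def dRel (G : Type*) [Group G] (X : Set G) : ℕ :=
  sInf {n : ℕ | ∃ f : Fin n → G, Subgroup.closure (X ∪ Set.range f) = ⊤}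

theorem stmt4 (G : Type*) [Group G] [Finite G] (X : Set G)
    (M : Subgroup G) [M.Normal] (r : ℕ) (g : Fin r → G)
    (hgen : Subgroup.closure (X ∪ Set.range g ∪ (M : Set G)) = ⊤)
    (hr : dRel G X ≤ r) :
    ∃ n : Fin r → G, (∀ i, n i ∈ M) ∧
      Subgroup.closure (X ∪ Set.range fun i => g i * n i) = ⊤ := by
  cases nonempty_fintype G
  -- the defining set of dRel is nonempty
  have hne : {n : ℕ | ∃ f : Fin n → G, Subgroup.closure (X ∪ Set.range f) = ⊤}.Nonempty := by
    obtain ⟨n, ⟨e⟩⟩ := Finite.exists_equiv_fin G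
    refine ⟨n, e.symm, ?_⟩
    rw [eq_top_iff]
    intro x _
    exact Subgroup.subset_closure (Or.inr ⟨e x, e.symm_apply_apply x⟩)
  obtain ⟨f, hf⟩ : ∃ f : Fin (dRel G X) → G,
      Subgroup.closure (X ∪ Set.range f) = ⊤ := Nat.sInf_mem hne
  -- pad f to a tuple of length r
  set h : Fin r → G := fun i => if hi : (i : ℕ) < dRel G X then f ⟨i, hi⟩ else 1 with hh
  have hhgen : Subgroup.closure (X ∪ Set.range h) = ⊤ := by
    rw [eq_top_iff, ← hf]
    apply (Subgroup.closure_le _).2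
    rintro x (hx | ⟨j, rfl⟩)
    · exact Subgroup.subset_closure (Or.inl hx)
    · have : f j = h ⟨j, lt_of_lt_of_le j.isLt hr⟩ := by
        simp [hh, j.isLt]
      rw [this]
      exact Subgroup.subset_closure (Or.inr ⟨_, rfl⟩)
  have hhgen' : Subgroup.closure (X ∪ Set.range h ∪ (M : Set G)) = ⊤ := by
    rw [eq_top_iff, ← hhgen]
    apply (Subgroup.closure_le _).2
    rintro x (hx | hx)
    · exact Subgroup.subset_closure (Or.inl (Or.inl hx))
    · exact Subgroup.subset_closure (Or.inl (Or.inr hx))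
  -- BSet for h at ⊤ is nonempty (take m = 1)
  have hBh : (BSet X M h ⊤).Nonempty := by
    refine ⟨fun _ => 1, ?_⟩
    simp only [BSet, Finset.mem_filter, Finset.mem_univ, true_and]
    exact ⟨fun i => one_mem M, by simpa using hhgen⟩
  have := BSet_card_eq X M (⊤ : Subgroup G) g h hgen hhgen'
  have hBg : (BSet X M g ⊤).Nonempty := by
    rw [← Finset.card_pos, this, Finset.card_pos]
    exact hBh
  obtain ⟨m, hm⟩ := hBg
  simp only [BSet, Finset.mem_filter, Finset.mem_univ, true_and] at hm
  exact ⟨m, hm.1, hm.2⟩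
end

section
/- Let Λ be a bipartite graph with parts P and Q, each of cardinality n, such that every vertex has degree at least εn, where 0 < ε and the number of edges of Λ is strictly greater than n²(1 − 2ε²). Then Λ is connected. -/
/-- The bipartite graph on `P ⊕ Q` determined by a relation `E : P → Q → Prop`. -/
def bipGraph {P Q : Type*} (E : P → Q → Prop) : SimpleGraph (P ⊕ Q) where
  Adj x y :=
    match x, y with
    | Sum.inl p, Sum.inr q => E p q
    | Sum.inr q, Sum.inl p => E p q
    | _, _ => False
  symm := ⟨by rintro (p | q) (p' | q') h <;> first | exact h.elim | exact h⟩
  loopless := ⟨by rintro (p | q) h <;> exact h⟩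

theorem stmt6 {P Q : Type*} [Fintype P] [Fintype Q] (n : ℕ)
    (hP : Fintype.card P = n) (hQ : Fintype.card Q = n)
    (E : P → Q → Prop) (ε : ℝ) (hε : 0 < ε)
    (hdP : ∀ p : P, ε * n ≤ Nat.card {q : Q // E p q})
    (hdQ : ∀ q : Q, ε * n ≤ Nat.card {p : P // E p q})
    (hedge : (n : ℝ) ^ 2 * (1 - 2 * ε ^ 2) <
      Nat.card {pq : P × Q // E pq.1 pq.2}) :
    (bipGraph E).Connected := by
  classical
  -- n is positive
  have hn : 0 < n := by
    rcases Nat.eq_zero_or_pos n with h | h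
    · subst h
      have hPe : IsEmpty P := Fintype.card_eq_zero_iff.mp hP
      have h0 : Nat.card {pq : P × Q // E pq.1 pq.2} = 0 := by
        have : IsEmpty {pq : P × Q // E pq.1 pq.2} := by
          refine ⟨fun x => hPe.false x.1.1⟩
        exact Nat.card_of_isEmpty
      rw [h0] at hedge
      norm_num at hedge
    · exact h
  have hεn : (0:ℝ) < ε * n := by positivity
  have hPne : Nonempty P := Fintype.card_pos_iff.mp (hP ▸ hn)
  -- neighbor cardinalities as finset cards
  have hNq : ∀ p : P, (Nat.card {q : Q // E p q} : ℝ)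
      = ((Finset.univ.filter fun q => E p q).card : ℝ) := by
    intro p
    rw [Nat.card_eq_fintype_card, Fintype.card_subtype]
  have hNp : ∀ q : Q, (Nat.card {p : P // E p q} : ℝ)
      = ((Finset.univ.filter fun p => E p q).card : ℝ) := by
    intro q
    rw [Nat.card_eq_fintype_card, Fintype.card_subtype]
  -- nonemptiness of neighborhoods
  have hNqne : ∀ p : P, ∃ q : Q, E p q := by
    intro p
    have h1 : (0:ℝ) < Nat.card {q : Q // E p q} := lt_of_lt_of_le hεn (hdP p)
    have h2 : 0 < Nat.card {q : Q // E p q} := by exact_mod_cast h1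
    obtain ⟨q⟩ := (Nat.card_pos_iff.mp h2).1
    exact ⟨q.1, q.2⟩
  have hNpne : ∀ q : Q, ∃ p : P, E p q := by
    intro q
    have h1 : (0:ℝ) < Nat.card {p : P // E p q} := lt_of_lt_of_le hεn (hdQ q)
    have h2 : 0 < Nat.card {p : P // E p q} := by exact_mod_cast h1
    obtain ⟨p⟩ := (Nat.card_pos_iff.mp h2).1
    exact ⟨p.1, p.2⟩
  by_contra hcon
  have hne : Nonempty (P ⊕ Q) := ⟨Sum.inl hPne.some⟩
  rw [SimpleGraph.connected_iff] at hcon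
  have hpre : ¬ (bipGraph E).Preconnected := fun hp => hcon ⟨hp, hne⟩
  have hex : ∃ (p₀ : P) (v : P ⊕ Q), ¬ (bipGraph E).Reachable (Sum.inl p₀) v := by
    simp only [SimpleGraph.Preconnected, not_forall] at hpre
    obtain ⟨u, v, huv⟩ := hpre
    rcases u with p₀ | q₀
    · exact ⟨p₀, v, huv⟩
    · obtain ⟨p₀, hp₀⟩ := hNpne q₀
      refine ⟨p₀, v, fun hr => huv ?_⟩
      have hadj : (bipGraph E).Adj (Sum.inr q₀) (Sum.inl p₀) := hp₀
      exact hadj.reachable.trans hr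
  obtain ⟨p₀, v, hv⟩ := hex
  set A : Finset P :=
    Finset.univ.filter (fun p => (bipGraph E).Reachable (Sum.inl p₀) (Sum.inl p)) with hA
  set B : Finset Q :=
    Finset.univ.filter (fun q => (bipGraph E).Reachable (Sum.inl p₀) (Sum.inr q)) with hB
  have hAB : ∀ p q, E p q → (p ∈ A ↔ q ∈ B) := by
    intro p q h
    have hadj : (bipGraph E).Adj (Sum.inl p) (Sum.inr q) := h
    simp only [hA, hB, Finset.mem_filter, Finset.mem_univ, true_and]
    exact ⟨fun hr => hr.trans hadj.reachable, fun hr => hr.trans hadj.symm.reachable⟩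
  have hp₀A : p₀ ∈ A := by
    simp only [hA, Finset.mem_filter, Finset.mem_univ, true_and]
    exact SimpleGraph.Reachable.refl _
  -- bounds from degrees
  have hmemA : ∀ p ∈ A, ε * n ≤ (B.card : ℝ) := by
    intro p hp
    refine le_trans (hdP p) ?_
    rw [hNq p]
    exact_mod_cast Finset.card_le_card (fun q hq => by
      rw [Finset.mem_filter] at hq
      exact (hAB p q hq.2).mp hp)
  have hmemB : ∀ q ∈ B, ε * n ≤ (A.card : ℝ) := by
    intro q hq
    refine le_trans (hdQ q) ?_
    rw [hNp q]
    exact_mod_cast Finset.card_le_card (fun p hp => by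
      rw [Finset.mem_filter] at hp
      exact (hAB p q hp.2).mpr hq)
  have hmemAc : ∀ p, p ∉ A → ε * n ≤ ((Bᶜ : Finset Q).card : ℝ) := by
    intro p hp
    refine le_trans (hdP p) ?_
    rw [hNq p]
    exact_mod_cast Finset.card_le_card (fun q hq => by
      rw [Finset.mem_filter] at hq
      rw [Finset.mem_compl]
      exact fun hqB => hp ((hAB p q hq.2).mpr hqB))
  have hmemBc : ∀ q, q ∉ B → ε * n ≤ ((Aᶜ : Finset P).card : ℝ) := by
    intro q hq
    refine le_trans (hdQ q) ?_
    rw [hNp q]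
    exact_mod_cast Finset.card_le_card (fun p hp => by
      rw [Finset.mem_filter] at hp
      rw [Finset.mem_compl]
      exact fun hpA => hq ((hAB p q hp.2).mp hpA))
  -- produce some q' ∉ B
  have hqB : ∃ q', q' ∉ B := by
    rcases v with p' | q'
    · have hp' : p' ∉ A := by
        simp only [hA, Finset.mem_filter, Finset.mem_univ, true_and]
        exact hv
      obtain ⟨q', hq'⟩ := hNqne p'
      exact ⟨q', fun hqB => hp' ((hAB p' q' hq').mpr hqB)⟩
    · refine ⟨q', ?_⟩
      simp only [hB, Finset.mem_filter, Finset.mem_univ, true_and]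
      exact hv
  obtain ⟨q', hq'⟩ := hqB
  have hAc : ε * n ≤ ((Aᶜ : Finset P).card : ℝ) := hmemBc q' hq'
  have hAcne : ∃ p', p' ∉ A := by
    have : (0:ℝ) < ((Aᶜ : Finset P).card : ℝ) := lt_of_lt_of_le hεn hAc
    have h2 : 0 < (Aᶜ : Finset P).card := by exact_mod_cast this
    obtain ⟨p', hp'⟩ := Finset.card_pos.mp h2
    exact ⟨p', Finset.mem_compl.mp hp'⟩
  obtain ⟨p', hp'⟩ := hAcne
  have hBc : ε * n ≤ ((Bᶜ : Finset Q).card : ℝ) := hmemAc p' hp'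
  have hb : ε * n ≤ (B.card : ℝ) := hmemA p₀ hp₀A
  have ha : ε * n ≤ (A.card : ℝ) := by
    have : (0:ℝ) < (B.card : ℝ) := lt_of_lt_of_le hεn hb
    have h2 : 0 < B.card := by exact_mod_cast this
    obtain ⟨q, hq⟩ := Finset.card_pos.mp h2
    exact hmemB q hq
  -- edge count bound
  have hEcard : Nat.card {pq : P × Q // E pq.1 pq.2}
      = (Finset.univ.filter fun pq : P × Q => E pq.1 pq.2).card := by
    rw [Nat.card_eq_fintype_card, Fintype.card_subtype]
  have hsub : (Finset.univ.filter fun pq : P × Q => E pq.1 pq.2)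
      ⊆ A ×ˢ B ∪ (Aᶜ) ×ˢ (Bᶜ) := by
    rintro ⟨p, q⟩ hpq
    rw [Finset.mem_filter] at hpq
    rcases Classical.em (p ∈ A) with hpA | hpA
    · exact Finset.mem_union_left _ (Finset.mem_product.mpr ⟨hpA, (hAB p q hpq.2).mp hpA⟩)
    · refine Finset.mem_union_right _ (Finset.mem_product.mpr
        ⟨Finset.mem_compl.mpr hpA, Finset.mem_compl.mpr fun hqB => hpA ((hAB p q hpq.2).mpr hqB)⟩)
  have hcount : Nat.card {pq : P × Q // E pq.1 pq.2}
      ≤ A.card * B.card + (Aᶜ : Finset P).card * (Bᶜ : Finset Q).card := by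
    rw [hEcard]
    calc (Finset.univ.filter fun pq : P × Q => E pq.1 pq.2).card
        ≤ (A ×ˢ B ∪ (Aᶜ) ×ˢ (Bᶜ)).card := Finset.card_le_card hsub
      _ ≤ (A ×ˢ B).card + ((Aᶜ) ×ˢ (Bᶜ)).card := Finset.card_union_le _ _
      _ = A.card * B.card + (Aᶜ : Finset P).card * (Bᶜ : Finset Q).card := by
          rw [Finset.card_product, Finset.card_product]
  -- compl cards
  have hAcc : ((Aᶜ : Finset P).card : ℝ) = (n : ℝ) - A.card := by
    rw [Finset.card_compl, hP]
    push_cast [Nat.cast_sub (hP ▸ Finset.card_le_univ A)]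
    ring
  have hBcc : ((Bᶜ : Finset Q).card : ℝ) = (n : ℝ) - B.card := by
    rw [Finset.card_compl, hQ]
    push_cast [Nat.cast_sub (hQ ▸ Finset.card_le_univ B)]
    ring
  have hcountR : (Nat.card {pq : P × Q // E pq.1 pq.2} : ℝ)
      ≤ (A.card : ℝ) * B.card + ((n:ℝ) - A.card) * ((n:ℝ) - B.card) := by
    rw [← hAcc, ← hBcc]
    exact_mod_cast hcount
  rw [hAcc] at hAc
  rw [hBcc] at hBc
  set a : ℝ := (A.card : ℝ)
  set b : ℝ := (B.card : ℝ)
  have hlast : (n:ℝ)^2 * (1 - 2*ε^2) < a * b + ((n:ℝ) - a) * ((n:ℝ) - b) :=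
    lt_of_lt_of_le hedge hcountR
  nlinarith [mul_nonneg (sub_nonneg.mpr ha) (sub_nonneg.mpr hBc),
    mul_nonneg (sub_nonneg.mpr hb) (sub_nonneg.mpr hAc),
    mul_nonneg (mul_nonneg hε.le (Nat.cast_nonneg n : (0:ℝ) ≤ n)) (sub_nonneg.mpr ha),
    mul_nonneg (mul_nonneg hε.le (Nat.cast_nonneg n : (0:ℝ) ≤ n)) (sub_nonneg.mpr hAc),
    mul_nonneg (mul_nonneg hε.le (Nat.cast_nonneg n : (0:ℝ) ≤ n)) (sub_nonneg.mpr hBc)]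
end

section
/- Δ₂(G) is connected for every finite group G if and only if Δ₂(G) is connected for every finite group G having no non-trivial soluble normal subgroup. -/
variable {G : Type*} [Group G]

lemma adj_iff {x y : G} :
    (genGraph G 2).Adj x y ↔ x ≠ y ∧ Subgroup.closure {x, y} = ⊤ := by
  classical
  constructor
  · rintro ⟨hxy, s, h1, h2, h3, h4⟩
    refine ⟨hxy, ?_⟩
    obtain ⟨u, v, huv, rfl⟩ := Finset.card_eq_two.mp h1
    have hset : ({x, y} : Set G) = (({u, v} : Finset G) : Set G) := by
      simp only [Finset.coe_insert, Finset.coe_singleton]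
      simp only [Finset.mem_insert, Finset.mem_singleton] at h2 h3
      rcases h2 with rfl | rfl <;> rcases h3 with rfl | rfl <;>
        first
          | exact absurd rfl hxy
          | rfl
          | (ext a; constructor <;> (rintro (rfl | rfl) <;> simp))
    rw [hset, h4]
  · rintro ⟨hxy, hcl⟩
    refine ⟨hxy, {x, y}, ?_, ?_, ?_, ?_⟩
    · rw [Finset.card_insert_of_notMem (by simpa using hxy), Finset.card_singleton]
    · simp
    · simp
    · rw [show (({x, y} : Finset G) : Set G) = ({x, y} : Set G) by simp]; exact hcl

lemma adj_of_gen {x y : G} (hxy : x ≠ y) (h : Subgroup.closure {x, y} = ⊤) :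
    (genGraph G 2).Adj x y := adj_iff.mpr ⟨hxy, h⟩

lemma nonIsolated_of_adj {x y : G} (h : (genGraph G 2).Adj x y) : NonIsolated G 2 x := ⟨y, h⟩

lemma closure_pair_comm (x y : G) : Subgroup.closure ({x, y} : Set G) = Subgroup.closure {y, x} := by
  rw [Set.pair_comm]


section Quot
set_option linter.unusedSectionVars false
set_option maxHeartbeats 1000000

lemma delta_adj {x y : {z : G // NonIsolated G 2 z}} (h : (genGraph G 2).Adj x.1 y.1) :
    (deltaGraph G 2).Adj x y := h

lemma delta_reach_of_adj {x y : {z : G // NonIsolated G 2 z}} (h : (genGraph G 2).Adj x.1 y.1) :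
    (deltaGraph G 2).Reachable x y := (delta_adj h).reachable

lemma closure_pair_top_left {g x : G} (hg : ∀ y : G, y ∈ Subgroup.zpowers g) :
    Subgroup.closure ({g, x} : Set G) = ⊤ := by
  rw [eq_top_iff]
  intro y _
  have : Subgroup.zpowers g ≤ Subgroup.closure ({g, x} : Set G) := by
    rw [Subgroup.zpowers_le]
    exact Subgroup.subset_closure (by simp)
  exact this (hg y)

lemma cyclic_preconnected [IsCyclic G] : (deltaGraph G 2).Preconnected := by
  intro u v
  by_cases huv : u = v
  · subst huv; rfl
  obtain ⟨g, hg⟩ := IsCyclic.exists_generator (α := G)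
  have hne : u.1 ≠ v.1 := fun h => huv (Subtype.ext h)
  by_cases hu : u.1 = g
  · exact delta_reach_of_adj (by rw [hu]; exact adj_of_gen (hu ▸ hne) (closure_pair_top_left hg))
  by_cases hv : v.1 = g
  · refine (delta_reach_of_adj (x := v) (y := u) ?_).symm
    rw [hv]; exact adj_of_gen (hv ▸ hne.symm) (closure_pair_top_left hg)
  · have hgn : NonIsolated G 2 g := ⟨u.1, adj_of_gen (Ne.symm hu) (closure_pair_top_left hg)⟩
    refine (delta_reach_of_adj (x := u) (y := ⟨g, hgn⟩) ?_).trans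
      (delta_reach_of_adj (x := ⟨g, hgn⟩) (y := v) ?_)
    · exact ((adj_of_gen (Ne.symm hu) (closure_pair_top_left hg)).symm)
    · exact adj_of_gen (Ne.symm hv) (closure_pair_top_left hg)

end Quot

section Lift
set_option linter.unusedSectionVars false
set_option maxHeartbeats 1000000

variable {G : Type} [Group G] [Finite G] (N : Subgroup G) [hN : N.Normal]

local notation "π" => QuotientGroup.mk' N

-- generation mod N
lemma gen_quot_iff (x y : G) :
    Subgroup.closure ({π x, π y} : Set (G ⧸ N)) = ⊤ ↔ Subgroup.closure {x, y} ⊔ N = ⊤ := by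
  have himg : ({π x, π y} : Set (G ⧸ N)) = π '' {x, y} := by
    simp [Set.image_insert_eq]
  rw [himg, ← MonoidHom.map_closure]
  constructor
  · intro h
    have := congrArg (Subgroup.comap (π)) h
    rw [Subgroup.comap_map_eq, QuotientGroup.ker_mk'] at this
    rw [this]
    exact Subgroup.comap_top _
  · intro h
    have h2 : Subgroup.map (π) (Subgroup.closure {x, y} ⊔ N) = ⊤ := by
      rw [h]
      exact Subgroup.map_top_of_surjective _ (QuotientGroup.mk'_surjective N)
    rw [Subgroup.map_sup] at h2
    have hNmap : Subgroup.map (π) N = ⊥ := by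
      rw [eq_bot_iff]
      rintro q ⟨n, hn, rfl⟩
      have : π n = 1 := by
        have : n ∈ (π).ker := by rwa [QuotientGroup.ker_mk' N]
        exact this
      simp [this]
    rwa [hNmap, sup_bot_eq] at h2

lemma dichotomy (hab : ∀ a b : G, a ∈ N → b ∈ N → a * b = b * a)
    (hmin : ∀ K : Subgroup G, K.Normal → K ≤ N → K = ⊥ ∨ K = N)
    (H : Subgroup G) (hH : H ⊔ N = ⊤) :
    H = ⊤ ∨ (H ⊓ N = ⊥) := by
  have hKnormal : (H ⊓ N).Normal := by
    constructor
    intro k hk g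
    have hg : g ∈ (↑(H ⊔ N) : Set G) := by rw [hH]; trivial
    rw [Subgroup.mul_normal] at hg
    obtain ⟨h, hh, n, hn, rfl⟩ := hg
    have hkN : k ∈ N := hk.2
    have hcomm : n * k * n⁻¹ = k := by
      rw [hab n k hn hkN]; group
    have heq : h * n * k * (h * n)⁻¹ = h * (n * k * n⁻¹) * h⁻¹ := by group
    rw [heq, hcomm]
    exact ⟨H.mul_mem (H.mul_mem hh hk.1) (H.inv_mem hh),
           hN.conj_mem k hkN h⟩
  rcases hmin _ hKnormal inf_le_right with h0 | h1
  · right; exact h0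
  · left
    have hNH : N ≤ H := by rw [← h1]; exact inf_le_left
    rw [← hH, sup_eq_left.mpr hNH]


lemma mem_N_iff (g : G) : g ∈ N ↔ π g = 1 := (QuotientGroup.eq_one_iff g).symm

section Cocycle
variable (κ : G ⧸ N →* G)

/-- coordinate of `g` relative to the section `κ`. -/
def coordN (g : G) : G := g * (κ (π g))⁻¹

lemma coordN_mem (hκ : ∀ q, π (κ q) = q) (g : G) : coordN N κ g ∈ N := by
  rw [mem_N_iff, coordN, map_mul, map_inv, hκ (π g)]
  simp

lemma coordN_spec (g : G) : coordN N κ g * κ (π g) = g := by simp [coordN]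

def IsCocycle (d : G ⧸ N → G) : Prop :=
  (∀ q, d q ∈ N) ∧ ∀ p q, d (p * q) = d p * (κ p * d q * (κ p)⁻¹)

lemma cocycle_one {d : G ⧸ N → G} (hd : IsCocycle N κ d) : d 1 = 1 := by
  have h := hd.2 1 1
  simp only [mul_one, map_one, one_mul, inv_one] at h
  have h2 : d 1 * (d 1)⁻¹ = (d 1 * d 1) * (d 1)⁻¹ := by rw [← h]
  simpa using h2.symm

lemma cocycle_mul (hab : ∀ a b : G, a ∈ N → b ∈ N → a * b = b * a)
    {d e : G ⧸ N → G} (hd : IsCocycle N κ d) (he : IsCocycle N κ e) :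
    IsCocycle N κ (fun q => d q * e q) := by
  refine ⟨fun q => N.mul_mem (hd.1 q) (he.1 q), fun p q => ?_⟩
  simp only
  rw [hd.2 p q, he.2 p q]
  have key : (κ p * d q * (κ p)⁻¹) * e p = e p * (κ p * d q * (κ p)⁻¹) := by
    apply hab
    · exact hN.conj_mem _ (hd.1 q) _
    · exact he.1 p
  calc d p * (κ p * d q * (κ p)⁻¹) * (e p * (κ p * e q * (κ p)⁻¹))
      = d p * ((κ p * d q * (κ p)⁻¹) * e p) * (κ p * e q * (κ p)⁻¹) := by group
    _ = d p * (e p * (κ p * d q * (κ p)⁻¹)) * (κ p * e q * (κ p)⁻¹) := by rw [key]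
    _ = d p * e p * (κ p * (d q * e q) * (κ p)⁻¹) := by group

lemma cocycle_inv (hab : ∀ a b : G, a ∈ N → b ∈ N → a * b = b * a)
    {d : G ⧸ N → G} (hd : IsCocycle N κ d) :
    IsCocycle N κ (fun q => (d q)⁻¹) := by
  refine ⟨fun q => N.inv_mem (hd.1 q), fun p q => ?_⟩
  simp only
  rw [hd.2 p q]
  have key : (d p)⁻¹ * (κ p * (d q)⁻¹ * (κ p)⁻¹) = (κ p * (d q)⁻¹ * (κ p)⁻¹) * (d p)⁻¹ := by
    apply hab
    · exact N.inv_mem (hd.1 p)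
    · exact hN.conj_mem _ (N.inv_mem (hd.1 q)) _
  calc (d p * (κ p * d q * (κ p)⁻¹))⁻¹
      = (κ p * (d q)⁻¹ * (κ p)⁻¹) * (d p)⁻¹ := by group
    _ = (d p)⁻¹ * (κ p * (d q)⁻¹ * (κ p)⁻¹) := key.symm

/-- the homomorphic section attached to a cocycle. -/
def secHom {d : G ⧸ N → G} (hd : IsCocycle N κ d) : G ⧸ N →* G :=
  MonoidHom.mk' (fun q => d q * κ q) (by
    intro p q
    rw [hd.2 p q]
    simp [mul_assoc, map_mul])

lemma secHom_pi (hκ : ∀ q, π (κ q) = q) {d : G ⧸ N → G} (hd : IsCocycle N κ d) (q : G ⧸ N) :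
    π (secHom N κ hd q) = q := by
  have h1 : π (d q) = 1 := (mem_N_iff N _).mp (hd.1 q)
  show π (d q * κ q) = q
  rw [map_mul, h1, one_mul, hκ q]

lemma mem_range_secHom (hκ : ∀ q, π (κ q) = q) {d : G ⧸ N → G} (hd : IsCocycle N κ d) (g : G) :
    g ∈ (secHom N κ hd).range ↔ d (π g) = coordN N κ g := by
  constructor
  · rintro ⟨q, rfl⟩
    have hq : π (secHom N κ hd q) = q := secHom_pi N κ hκ hd q
    rw [hq]
    show d q = (d q * κ q) * (κ (π (secHom N κ hd q)))⁻¹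
    rw [hq]; group
  · intro h
    refine ⟨π g, ?_⟩
    show d (π g) * κ (π g) = g
    rw [h, coordN_spec]
end Cocycle


lemma exists_sec_of_comp (K : Subgroup G) (h1 : K ⊓ N = ⊥) (h2 : K ⊔ N = ⊤) :
    ∃ s : G ⧸ N →* G, (∀ q, π (s q) = q) ∧ s.range = K := by
  have hbij : Function.Bijective ((π).comp K.subtype) := by
    constructor
    · rw [← MonoidHom.ker_eq_bot_iff]
      rw [eq_bot_iff]
      intro k hk
      have hkN : (k : G) ∈ N := by
        rw [mem_N_iff N]
        exact hk
      have : (k : G) ∈ K ⊓ N := ⟨k.2, hkN⟩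
      rw [h1] at this
      simpa [Subgroup.mem_bot] using this
    · intro q
      obtain ⟨g, rfl⟩ := QuotientGroup.mk'_surjective N q
      have hg : g ∈ (↑(K ⊔ N) : Set G) := by rw [h2]; trivial
      rw [Subgroup.mul_normal] at hg
      obtain ⟨k, hk, n, hn, rfl⟩ := hg
      refine ⟨⟨k, hk⟩, ?_⟩
      have hn1 : π n = 1 := (mem_N_iff N n).mp hn
      simp [map_mul, hn1]
  let e := MulEquiv.ofBijective ((π).comp K.subtype) hbij
  refine ⟨K.subtype.comp e.symm.toMonoidHom, fun q => ?_, ?_⟩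
  · have : (π).comp K.subtype (e.symm q) = q := by
      show e (e.symm q) = q
      exact e.apply_symm_apply q
    exact this
  · ext g
    constructor
    · rintro ⟨q, rfl⟩
      exact (e.symm q).2
    · intro hg
      exact ⟨e ⟨g, hg⟩, by simp⟩

section Machine
variable (κ : G ⧸ N →* G)

lemma secHom_range_inf (hκ : ∀ q, π (κ q) = q) {d : G ⧸ N → G} (hd : IsCocycle N κ d) :
    (secHom N κ hd).range ⊓ N = ⊥ := by
  rw [eq_bot_iff]
  rintro g ⟨⟨q, rfl⟩, hgN⟩
  have h1 : π (secHom N κ hd q) = q := secHom_pi N κ hκ hd q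
  have h2 : π (secHom N κ hd q) = 1 := (mem_N_iff N _).mp hgN
  rw [h1] at h2
  subst h2
  have : secHom N κ hd 1 = 1 := map_one _
  simp [this, Subgroup.mem_bot]

lemma secHom_range_sup (hκ : ∀ q, π (κ q) = q) {d : G ⧸ N → G} (hd : IsCocycle N κ d) :
    (secHom N κ hd).range ⊔ N = ⊤ := by
  rw [eq_top_iff]
  intro g _
  have hn : (secHom N κ hd (π g))⁻¹ * g ∈ N := by
    rw [mem_N_iff]
    rw [map_mul, map_inv, secHom_pi N κ hκ hd]
    simp
  have : g = (secHom N κ hd (π g)) * ((secHom N κ hd (π g))⁻¹ * g) := by group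
  rw [this]
  exact Subgroup.mul_mem_sup ⟨π g, rfl⟩ hn

lemma cocycle_of_comp (hκ : ∀ q, π (κ q) = q) (K : Subgroup G) (h1 : K ⊓ N = ⊥) (h2 : K ⊔ N = ⊤) :
    ∃ d, IsCocycle N κ d ∧ ∀ g, (g ∈ K ↔ d (π g) = coordN N κ g) := by
  obtain ⟨s, hs, hrange⟩ := exists_sec_of_comp N K h1 h2
  refine ⟨fun q => s q * (κ q)⁻¹, ⟨fun q => ?_, fun p q => ?_⟩, fun g => ?_⟩
  · rw [mem_N_iff, map_mul, map_inv, hs, hκ]; simp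
  · simp only [map_mul]
    group
  · constructor
    · intro hg
      rw [← hrange] at hg
      obtain ⟨q, rfl⟩ := hg
      rw [hs q]
      show s q * (κ q)⁻¹ = s q * (κ (π (s q)))⁻¹
      rw [hs q]
    · intro h
      have : s (π g) = g := by
        have := h
        simp only [coordN] at this
        have h2 : s (π g) * (κ (π g))⁻¹ * (κ (π g)) = g * (κ (π g))⁻¹ * (κ (π g)) := by rw [this]
        simpa using h2
      rw [← hrange]
      exact ⟨π g, this⟩

/-- no complement contains both `g` and `h` (cocycle form). -/
def NoShared (g h : G) : Prop :=
  ¬ ∃ d, IsCocycle N κ d ∧ d (π g) = coordN N κ g ∧ d (π h) = coordN N κ h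

lemma gen_of_noShared (hκ : ∀ q, π (κ q) = q)
    (hab : ∀ a b : G, a ∈ N → b ∈ N → a * b = b * a)
    (hmin : ∀ K : Subgroup G, K.Normal → K ≤ N → K = ⊥ ∨ K = N)
    (g h : G) (hq : Subgroup.closure ({π g, π h} : Set (G ⧸ N)) = ⊤)
    (hns : NoShared N κ g h) : Subgroup.closure {g, h} = ⊤ := by
  have hsup : Subgroup.closure {g, h} ⊔ N = ⊤ := (gen_quot_iff N g h).mp hq
  rcases dichotomy N hab hmin _ hsup with ht | hinf
  · exact ht
  · exfalso
    obtain ⟨d, hd, hmem⟩ := cocycle_of_comp N κ hκ _ hinf hsup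
    exact hns ⟨d, hd, (hmem g).mp (Subgroup.subset_closure (by simp)),
      (hmem h).mp (Subgroup.subset_closure (by simp))⟩

lemma noShared_of_gen (hκ : ∀ q, π (κ q) = q) (hNbot : N ≠ ⊥) (g h : G)
    (hg : Subgroup.closure {g, h} = ⊤) : NoShared N κ g h := by
  rintro ⟨d, hd, h1, h2⟩
  have hsub : Subgroup.closure {g, h} ≤ (secHom N κ hd).range := by
    rw [Subgroup.closure_le]
    rintro x (rfl | rfl)
    · exact (mem_range_secHom N κ hκ hd _).mpr h1
    · exact (mem_range_secHom N κ hκ hd _).mpr (by simpa using h2)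
  rw [hg, top_le_iff] at hsub
  have := secHom_range_inf N κ hκ hd
  rw [hsub, top_inf_eq] at this
  exact hNbot this

end Machine

section Ev
variable (κ : G ⧸ N →* G)

/-- every element of `N` is a cocycle value at `z`. -/
def OntoEv (z : G ⧸ N) : Prop := ∀ n ∈ N, ∃ d, IsCocycle N κ d ∧ d z = n

/-- `m` is a value at `z` of a cocycle vanishing at `x`. -/
def memU (z x : G ⧸ N) (m : G) : Prop := ∃ d, IsCocycle N κ d ∧ d x = 1 ∧ d z = m

lemma cocycle_const_one : IsCocycle N κ (fun _ => 1) := by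
  refine ⟨fun _ => N.one_mem, fun p q => by simp⟩

lemma memU_one (z x : G ⧸ N) : memU N κ z x 1 :=
  ⟨fun _ => 1, cocycle_const_one N κ, rfl, rfl⟩

lemma memU_memN {z x : G ⧸ N} {m : G} (h : memU N κ z x m) : m ∈ N := by
  obtain ⟨d, hd, -, rfl⟩ := h
  exact hd.1 z

lemma memU_mul (hab : ∀ a b : G, a ∈ N → b ∈ N → a * b = b * a)
    {z x : G ⧸ N} {m m' : G} (h : memU N κ z x m) (h' : memU N κ z x m') :
    memU N κ z x (m * m') := by
  obtain ⟨d, hd, h1, h2⟩ := h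
  obtain ⟨d', hd', h1', h2'⟩ := h'
  exact ⟨fun q => d q * d' q, cocycle_mul N κ hab hd hd', by simp [h1, h1'],
    by simp [h2, h2']⟩

lemma memU_inv (hab : ∀ a b : G, a ∈ N → b ∈ N → a * b = b * a)
    {z x : G ⧸ N} {m : G} (h : memU N κ z x m) : memU N κ z x m⁻¹ := by
  obtain ⟨d, hd, h1, h2⟩ := h
  exact ⟨fun q => (d q)⁻¹, cocycle_inv N κ hab hd, by simp [h1], by simp [h2]⟩

/-- a cocycle vanishing on a generating pair vanishes. -/
lemma cocycle_vanish {z x : G ⧸ N} (hgen : Subgroup.closure ({z, x} : Set (G ⧸ N)) = ⊤)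
    {d : G ⧸ N → G} (hd : IsCocycle N κ d) (h1 : d z = 1) (h2 : d x = 1) :
    ∀ q, d q = 1 := by
  let H : Subgroup (G ⧸ N) :=
    { carrier := {q | d q = 1}
      one_mem' := cocycle_one N κ hd
      mul_mem' := by
        intro p q hp hq
        show d (p * q) = 1
        rw [hd.2 p q, hp, hq]
        simp
      inv_mem' := by
        intro q hq
        show d q⁻¹ = 1
        have h0 : d (q * q⁻¹) = 1 := by
          rw [mul_inv_cancel]
          exact cocycle_one N κ hd
        rw [hd.2 q q⁻¹, hq, one_mul] at h0
        have : κ q * d q⁻¹ * (κ q)⁻¹ = 1 := h0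
        have h3 : d q⁻¹ = (κ q)⁻¹ * 1 * (κ q) := by
          rw [← this]; group
        simpa using h3 }
  intro q
  have : q ∈ H := by
    have hle : Subgroup.closure ({z, x} : Set (G ⧸ N)) ≤ H := by
      rw [Subgroup.closure_le]
      rintro y (rfl | rfl)
      · exact h1
      · exact h2
    rw [hgen] at hle
    exact hle trivial
  exact this

lemma cocycle_eq_on_pair (hab : ∀ a b : G, a ∈ N → b ∈ N → a * b = b * a)
    {z x : G ⧸ N} (hgen : Subgroup.closure ({z, x} : Set (G ⧸ N)) = ⊤)
    {d d' : G ⧸ N → G} (hd : IsCocycle N κ d) (hd' : IsCocycle N κ d')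
    (h1 : d z = d' z) (h2 : d x = d' x) : d = d' := by
  have hc : IsCocycle N κ (fun q => d q * (d' q)⁻¹) :=
    cocycle_mul N κ hab hd (cocycle_inv N κ hab hd')
  have hv := cocycle_vanish N κ hgen hc (by simp [h1]) (by simp [h2])
  funext q
  have := hv q
  have h3 : d q * (d' q)⁻¹ * d' q = 1 * d' q := by rw [this]
  simpa using h3

/-- the h1 transfer lemma. -/
lemma h1_iff (hab : ∀ a b : G, a ∈ N → b ∈ N → a * b = b * a)
    {z x : G ⧸ N} (hgen : Subgroup.closure ({z, x} : Set (G ⧸ N)) = ⊤)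
    {d : G ⧸ N → G} (hd : IsCocycle N κ d) :
    memU N κ z x (d z) ↔ memU N κ x z (d x) := by
  have main : ∀ (w y : G ⧸ N), Subgroup.closure ({w, y} : Set (G ⧸ N)) = ⊤ →
      ∀ (e : G ⧸ N → G), IsCocycle N κ e → memU N κ w y (e w) → memU N κ y w (e y) := by
    intro w y hwy e he hm
    obtain ⟨d0, hd0, hd0y, hd0w⟩ := hm
    refine ⟨fun q => e q * (d0 q)⁻¹, cocycle_mul N κ hab he (cocycle_inv N κ hab hd0), ?_, ?_⟩
    · simp [hd0w]
    · simp [hd0y]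
  constructor
  · exact main z x hgen d hd
  · intro h
    have hgen' : Subgroup.closure ({x, z} : Set (G ⧸ N)) = ⊤ := by
      rwa [Set.pair_comm]
    exact main x z hgen' d hd h

/-- properness: the `U`-sets are proper subsets of `N`. -/
lemma exists_not_memU (hκ : ∀ q, π (κ q) = q)
    (hab : ∀ a b : G, a ∈ N → b ∈ N → a * b = b * a)
    (hNbot : N ≠ ⊥)
    {a b : G} (hgenG : Subgroup.closure ({a, b} : Set G) = ⊤)
    {z x : G ⧸ N} (hgen : Subgroup.closure ({z, x} : Set (G ⧸ N)) = ⊤)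
    (honto : OntoEv N κ z) :
    ∃ n ∈ N, ¬ memU N κ x z n := by
  by_contra hall
  push_neg at hall
  -- the type of cocycles
  let T := {d : G ⧸ N → G // IsCocycle N κ d}
  have : Finite (G ⧸ N → G) := by infer_instance
  have hTf : Finite T := by infer_instance
  let Θ : T → ↥N × ↥N := fun d => (⟨d.1 z, d.2.1 z⟩, ⟨d.1 x, d.2.1 x⟩)
  have hΘbij : Function.Bijective Θ := by
    constructor
    · intro d d' h
      have h1 : d.1 z = d'.1 z := congrArg (fun p => (p.1 : G)) h
      have h2 : d.1 x = d'.1 x := congrArg (fun p => (p.2 : G)) h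
      exact Subtype.ext (cocycle_eq_on_pair N κ hab hgen d.2 d'.2 h1 h2)
    · rintro ⟨⟨t, ht⟩, ⟨s, hs⟩⟩
      obtain ⟨d, hd, hdz⟩ := honto t ht
      have hsN : s * (d x)⁻¹ ∈ N := N.mul_mem hs (N.inv_mem (hd.1 x))
      obtain ⟨e, he, he1, he2⟩ := hall _ hsN
      refine ⟨⟨fun q => e q * d q, cocycle_mul N κ hab he hd⟩, ?_⟩
      have hz : e z * d z = t := by rw [he1, one_mul, hdz]
      have hx : e x * d x = s := by rw [he2]; group
      simp only [Θ]
      exact Prod.ext (Subtype.ext hz) (Subtype.ext hx)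
  let e1 : T ≃ ↥N × ↥N := Equiv.ofBijective Θ hΘbij
  -- second injection at the generating pair of G
  have hgenq : Subgroup.closure ({π a, π b} : Set (G ⧸ N)) = ⊤ := by
    rw [gen_quot_iff]
    rw [hgenG]
    exact top_sup_eq N
  let Θ' : T → ↥N × ↥N := fun d => (⟨d.1 (π a), d.2.1 _⟩, ⟨d.1 (π b), d.2.1 _⟩)
  have hΘ'inj : Function.Injective Θ' := by
    intro d d' h
    have h1 : d.1 (π a) = d'.1 (π a) := congrArg (fun p => (p.1 : G)) h
    have h2 : d.1 (π b) = d'.1 (π b) := congrArg (fun p => (p.2 : G)) h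
    exact Subtype.ext (cocycle_eq_on_pair N κ hab hgenq d.2 d'.2 h1 h2)
  have hcomp : Function.Injective (Θ' ∘ e1.symm) := hΘ'inj.comp e1.symm.injective
  have hsurj : Function.Surjective (Θ' ∘ e1.symm) :=
    Finite.surjective_of_injective hcomp
  obtain ⟨d, hd⟩ := hsurj (⟨coordN N κ a, coordN_mem N κ hκ a⟩, ⟨coordN N κ b, coordN_mem N κ hκ b⟩)
  set d' := e1.symm d with hd'
  have h1 : d'.1 (π a) = coordN N κ a := congrArg (fun p => (p.1 : G)) hd
  have h2 : d'.1 (π b) = coordN N κ b := congrArg (fun p => (p.2 : G)) hd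
  exact noShared_of_gen N κ hκ hNbot a b hgenG ⟨d'.1, d'.2, h1, h2⟩

end Ev

section Merge
variable (κ : G ⧸ N →* G)

lemma gen_to_quot {g h : G} (hg : Subgroup.closure ({g, h} : Set G) = ⊤) :
    Subgroup.closure ({π g, π h} : Set (G ⧸ N)) = ⊤ := by
  rw [gen_quot_iff, hg, top_sup_eq]

lemma copair_left {a b : G ⧸ N} (h : Subgroup.closure ({a, b} : Set (G ⧸ N)) = ⊤) :
    Subgroup.closure ({a, a * b} : Set (G ⧸ N)) = ⊤ := by
  have hb : b ∈ Subgroup.closure ({a, a * b} : Set (G ⧸ N)) := by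
    have ha : a ∈ Subgroup.closure ({a, a * b} : Set (G ⧸ N)) :=
      Subgroup.subset_closure (by simp)
    have hab2 : a * b ∈ Subgroup.closure ({a, a * b} : Set (G ⧸ N)) :=
      Subgroup.subset_closure (by simp)
    have := Subgroup.mul_mem _ (Subgroup.inv_mem _ ha) hab2
    simpa using this
  rw [eq_top_iff, ← h, Subgroup.closure_le]
  intro y hy
  rcases hy with hy | hy
  · exact hy ▸ Subgroup.subset_closure (by simp)
  · simp only [Set.mem_singleton_iff] at hy
    exact hy ▸ hb

lemma copair_right {a b : G ⧸ N} (h : Subgroup.closure ({a, b} : Set (G ⧸ N)) = ⊤) :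
    Subgroup.closure ({b, a * b} : Set (G ⧸ N)) = ⊤ := by
  have ha : a ∈ Subgroup.closure ({b, a * b} : Set (G ⧸ N)) := by
    have hb : b ∈ Subgroup.closure ({b, a * b} : Set (G ⧸ N)) :=
      Subgroup.subset_closure (by simp)
    have hab2 : a * b ∈ Subgroup.closure ({b, a * b} : Set (G ⧸ N)) :=
      Subgroup.subset_closure (by simp)
    have := Subgroup.mul_mem _ hab2 (Subgroup.inv_mem _ hb)
    simpa using this
  rw [eq_top_iff, ← h, Subgroup.closure_le]
  intro y hy
  rcases hy with hy | hy
  · exact hy ▸ ha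
  · simp only [Set.mem_singleton_iff] at hy
    exact hy ▸ Subgroup.subset_closure (by simp)

lemma pair_ne_of_noncyc (hQnc : ∀ q : G ⧸ N, Subgroup.zpowers q ≠ ⊤)
    {a b : G ⧸ N} (h : Subgroup.closure ({a, b} : Set (G ⧸ N)) = ⊤) :
    a ≠ b ∧ a ≠ 1 ∧ b ≠ 1 := by
  refine ⟨?_, ?_, ?_⟩
  · rintro rfl
    apply hQnc a
    rw [eq_top_iff, ← h, Subgroup.closure_le]
    rintro y (rfl | rfl) <;> exact Subgroup.mem_zpowers _
  · rintro rfl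
    apply hQnc b
    rw [eq_top_iff, ← h, Subgroup.closure_le]
    rintro y (rfl | rfl)
    · exact Subgroup.one_mem _
    · exact Subgroup.mem_zpowers _
  · rintro rfl
    apply hQnc a
    rw [eq_top_iff, ← h, Subgroup.closure_le]
    rintro y (rfl | rfl)
    · exact Subgroup.mem_zpowers _
    · exact Subgroup.one_mem _

lemma pi_sec_mul (hκ : ∀ q, π (κ q) = q) {s : G} (hs : s ∈ N) (y : G ⧸ N) :
    π (s * κ y) = y := by
  rw [map_mul, (mem_N_iff N s).mp hs, one_mul, hκ]

lemma coordN_sec_mul (hκ : ∀ q, π (κ q) = q) {s : G} (hs : s ∈ N) (y : G ⧸ N) :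
    coordN N κ (s * κ y) = s := by
  rw [coordN, pi_sec_mul N κ hκ hs y]
  group

/-- packaged adjacency from quotient generation + no shared complement. -/
lemma adj_pkg (hκ : ∀ q, π (κ q) = q)
    (hab : ∀ a b : G, a ∈ N → b ∈ N → a * b = b * a)
    (hmin : ∀ K : Subgroup G, K.Normal → K ≤ N → K = ⊥ ∨ K = N)
    {g h : G} (hne : π g ≠ π h)
    (hq : Subgroup.closure ({π g, π h} : Set (G ⧸ N)) = ⊤)
    (hns : NoShared N κ g h) : (genGraph G 2).Adj g h := by
  refine adj_of_gen (fun e => hne (by rw [e])) ?_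
  exact gen_of_noShared N κ hκ hab hmin g h hq hns

lemma Ncomm (hab : ∀ a b : G, a ∈ N → b ∈ N → a * b = b * a) {a b : G}
    (ha : a ∈ N) (hb : b ∈ N) : a * b = b * a := hab a b ha hb

lemma reach2 {u X v : G} (h1 : (genGraph G 2).Adj u X) (h2 : (genGraph G 2).Adj X v)
    (hu : NonIsolated G 2 u) (hv : NonIsolated G 2 v) :
    (deltaGraph G 2).Reachable ⟨u, hu⟩ ⟨v, hv⟩ :=
  (delta_reach_of_adj (x := ⟨u, hu⟩) (y := ⟨X, ⟨u, h1.symm⟩⟩) h1).trans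
    (delta_reach_of_adj h2)

lemma reach3 {u X W v : G} (h1 : (genGraph G 2).Adj u X) (h2 : (genGraph G 2).Adj X W)
    (h3 : (genGraph G 2).Adj W v)
    (hu : NonIsolated G 2 u) (hv : NonIsolated G 2 v) :
    (deltaGraph G 2).Reachable ⟨u, hu⟩ ⟨v, hv⟩ :=
  (delta_reach_of_adj (x := ⟨u, hu⟩) (y := ⟨X, ⟨u, h1.symm⟩⟩) h1).trans
    ((delta_reach_of_adj (x := ⟨X, ⟨u, h1.symm⟩⟩) (y := ⟨W, ⟨X, h2.symm⟩⟩) h2).trans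
      (delta_reach_of_adj h3))

lemma reach4 {u X W Y v : G} (h1 : (genGraph G 2).Adj u X) (h2 : (genGraph G 2).Adj X W)
    (h3 : (genGraph G 2).Adj W Y) (h4 : (genGraph G 2).Adj Y v)
    (hu : NonIsolated G 2 u) (hv : NonIsolated G 2 v) :
    (deltaGraph G 2).Reachable ⟨u, hu⟩ ⟨v, hv⟩ :=
  (delta_reach_of_adj (x := ⟨u, hu⟩) (y := ⟨X, ⟨u, h1.symm⟩⟩) h1).trans
    ((delta_reach_of_adj (x := ⟨X, ⟨u, h1.symm⟩⟩) (y := ⟨W, ⟨X, h2.symm⟩⟩) h2).trans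
      ((delta_reach_of_adj (x := ⟨W, ⟨X, h2.symm⟩⟩) (y := ⟨Y, ⟨W, h3.symm⟩⟩) h3).trans
        (delta_reach_of_adj h4)))

section Merge2
variable (κ : G ⧸ N →* G)

lemma common_nb (hκ : ∀ q, π (κ q) = q)
    (hab : ∀ a b : G, a ∈ N → b ∈ N → a * b = b * a)
    (hmin : ∀ K : Subgroup G, K.Normal → K ≤ N → K = ⊥ ∨ K = N)
    {z y : G ⧸ N}
    (hgen : Subgroup.closure ({z, y} : Set (G ⧸ N)) = ⊤) (hzy : z ≠ y)
    (hontoz : OntoEv N κ z)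
    {u v : G} (hπu : π u = z) (hπv : π v = z)
    (hU : memU N κ z y (coordN N κ v * (coordN N κ u)⁻¹))
    (hprop : ∃ n ∈ N, ¬ memU N κ y z n)
    (hu : NonIsolated G 2 u) (hv : NonIsolated G 2 v) :
    (deltaGraph G 2).Reachable ⟨u, hu⟩ ⟨v, hv⟩ := by
  obtain ⟨ξ, hξN, hξ⟩ := hprop
  obtain ⟨du, hdu, hduz⟩ := hontoz (coordN N κ u) (coordN_mem N κ hκ u)
  set s : G := du y * ξ with hs
  have hsN : s ∈ N := N.mul_mem (hdu.1 y) hξN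
  set X : G := s * κ y with hX
  have hπX : π X = y := pi_sec_mul N κ hκ hsN y
  have hcX : coordN N κ X = s := coordN_sec_mul N κ hκ hsN y
  have hadj1 : (genGraph G 2).Adj u X := by
    refine adj_pkg N κ hκ hab hmin ?_ ?_ ?_
    · rw [hπu, hπX]; exact hzy
    · rw [hπu, hπX]; exact hgen
    · rintro ⟨c, hc, hcu, hcXv⟩
      rw [hπu] at hcu
      rw [hπX, hcX] at hcXv
      apply hξ
      refine ⟨fun q => c q * (du q)⁻¹,
        cocycle_mul N κ hab hc (cocycle_inv N κ hab hdu), ?_, ?_⟩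
      · simp only
        rw [hcu, hduz]; group
      · simp only
        rw [hcXv, hs]
        rw [Ncomm N hab (hdu.1 y) hξN]
        group
  have hadj2 : (genGraph G 2).Adj v X := by
    refine adj_pkg N κ hκ hab hmin ?_ ?_ ?_
    · rw [hπv, hπX]; exact hzy
    · rw [hπv, hπX]; exact hgen
    · rintro ⟨c, hc, hcv, hcXv⟩
      rw [hπv] at hcv
      rw [hπX, hcX] at hcXv
      obtain ⟨d0, hd0, hd0y, hd0z⟩ := hU
      apply hξ
      refine ⟨fun q => (c q * (du q)⁻¹) * (d0 q)⁻¹,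
        cocycle_mul N κ hab (cocycle_mul N κ hab hc (cocycle_inv N κ hab hdu))
          (cocycle_inv N κ hab hd0), ?_, ?_⟩
      · simp only
        rw [hcv, hduz, hd0z]
        group
      · simp only
        rw [hcXv, hd0y, hs]
        rw [Ncomm N hab (hdu.1 y) hξN]
        group
  exact reach2 hadj1 hadj2.symm hu hv

lemma exists_avoid_two (hab : ∀ a b : G, a ∈ N → b ∈ N → a * b = b * a) {y p q : G ⧸ N}
    (hp : ∃ n ∈ N, ¬ memU N κ y p n) (hq : ∃ n ∈ N, ¬ memU N κ y q n) :
    ∃ ζ ∈ N, ¬ memU N κ y p ζ ∧ ¬ memU N κ y q ζ := by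
  by_cases hc : ∀ m ∈ N, memU N κ y p m → memU N κ y q m
  · obtain ⟨ζ, hζN, hζ⟩ := hq
    exact ⟨ζ, hζN, fun h => hζ (hc ζ hζN h), hζ⟩
  by_cases hc' : ∀ m ∈ N, memU N κ y q m → memU N κ y p m
  · obtain ⟨ζ, hζN, hζ⟩ := hp
    exact ⟨ζ, hζN, hζ, fun h => hζ (hc' ζ hζN h)⟩
  push_neg at hc hc'
  obtain ⟨a, haN, hap, haq⟩ := hc
  obtain ⟨b, hbN, hbq, hbp⟩ := hc'
  refine ⟨a * b, N.mul_mem haN hbN, ?_, ?_⟩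
  · intro h
    apply hbp
    have := memU_mul N κ hab (memU_inv N κ hab hap) h
    simpa using this
  · intro h
    apply haq
    have := memU_mul N κ hab h (memU_inv N κ hab hbq)
    simpa [mul_assoc] using this

lemma route_path (hκ : ∀ q, π (κ q) = q)
    (hab : ∀ a b : G, a ∈ N → b ∈ N → a * b = b * a)
    (hmin : ∀ K : Subgroup G, K.Normal → K ≤ N → K = ⊥ ∨ K = N)
    {z y1 y2 : G ⧸ N}
    (hg1 : Subgroup.closure ({z, y1} : Set (G ⧸ N)) = ⊤)
    (hg12 : Subgroup.closure ({y1, y2} : Set (G ⧸ N)) = ⊤)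
    (hg2 : Subgroup.closure ({z, y2} : Set (G ⧸ N)) = ⊤)
    (hzy1 : z ≠ y1) (h12 : y1 ≠ y2) (hzy2 : z ≠ y2)
    (hontoz : OntoEv N κ z)
    {u v : G} (hπu : π u = z) (hπv : π v = z)
    (hu : NonIsolated G 2 u) (hv : NonIsolated G 2 v)
    {e1 e2 : G ⧸ N → G} (he1 : IsCocycle N κ e1) (he2 : IsCocycle N κ e2)
    (ha1 : ¬ memU N κ y1 z (e1 y1))
    (ha2 : ¬ memU N κ y2 y1 (e2 y2))
    (ha3 : ¬ memU N κ z y2 (e1 z * e2 z * (coordN N κ v * (coordN N κ u)⁻¹)⁻¹)) :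
    (deltaGraph G 2).Reachable ⟨u, hu⟩ ⟨v, hv⟩ := by
  obtain ⟨du, hdu, hduz⟩ := hontoz (coordN N κ u) (coordN_mem N κ hκ u)
  set d : G ⧸ N → G := fun q => e1 q * du q with hd_def
  have hd : IsCocycle N κ d := cocycle_mul N κ hab he1 hdu
  set s1 : G := d y1 with hs1
  have hs1N : s1 ∈ N := hd.1 y1
  set X : G := s1 * κ y1 with hX
  have hπX : π X = y1 := pi_sec_mul N κ hκ hs1N y1
  have hcX : coordN N κ X = s1 := coordN_sec_mul N κ hκ hs1N y1
  set E : G ⧸ N → G := fun q => e2 q * d q with hE_def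
  have hE : IsCocycle N κ E := cocycle_mul N κ hab he2 hd
  set r : G := E y2 with hr
  have hrN : r ∈ N := hE.1 y2
  set W : G := r * κ y2 with hW
  have hπW : π W = y2 := pi_sec_mul N κ hκ hrN y2
  have hcW : coordN N κ W = r := coordN_sec_mul N κ hκ hrN y2
  have hadj1 : (genGraph G 2).Adj u X := by
    refine adj_pkg N κ hκ hab hmin ?_ ?_ ?_
    · rw [hπu, hπX]; exact hzy1
    · rw [hπu, hπX]; exact hg1
    · rintro ⟨c, hc, hcu, hcXv⟩
      rw [hπu] at hcu
      rw [hπX, hcX] at hcXv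
      apply ha1
      refine ⟨fun q => c q * (du q)⁻¹,
        cocycle_mul N κ hab hc (cocycle_inv N κ hab hdu), ?_, ?_⟩
      · simp only; rw [hcu, hduz]; group
      · simp only; rw [hcXv, hs1, hd_def]; simp only; group
  have hadj2 : (genGraph G 2).Adj X W := by
    refine adj_pkg N κ hκ hab hmin ?_ ?_ ?_
    · rw [hπX, hπW]; exact h12
    · rw [hπX, hπW]; exact hg12
    · rintro ⟨c, hc, hcXv, hcWv⟩
      rw [hπX, hcX] at hcXv
      rw [hπW, hcW] at hcWv
      apply ha2
      refine ⟨fun q => c q * (d q)⁻¹,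
        cocycle_mul N κ hab hc (cocycle_inv N κ hab hd), ?_, ?_⟩
      · simp only; rw [hcXv, hs1]; group
      · simp only; rw [hcWv, hr, hE_def]; simp only; group
  have hadj3 : (genGraph G 2).Adj W v := by
    have hadj3' : (genGraph G 2).Adj v W := by
      refine adj_pkg N κ hκ hab hmin ?_ ?_ ?_
      · rw [hπv, hπW]; exact hzy2
      · rw [hπv, hπW]; exact hg2
      · rintro ⟨c, hc, hcv, hcWv⟩
        rw [hπv] at hcv
        rw [hπW, hcW] at hcWv
        apply ha3
        have hmem : memU N κ z y2 (c z * (E z)⁻¹) := by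
          refine ⟨fun q => c q * (E q)⁻¹,
            cocycle_mul N κ hab hc (cocycle_inv N κ hab hE), ?_, rfl⟩
          simp only; rw [hcWv, hr]; group
        have hmem2 := memU_inv N κ hab hmem
        have hEz : E z = e2 z * (e1 z * coordN N κ u) := by
          rw [hE_def]; simp only; rw [hd_def]; simp only; rw [hduz]
        have heq : (c z * (E z)⁻¹)⁻¹ =
            e1 z * e2 z * (coordN N κ v * (coordN N κ u)⁻¹)⁻¹ := by
          rw [hcv, hEz]
          have hswap : e2 z * e1 z = e1 z * e2 z :=
            Ncomm N hab (he2.1 z) (he1.1 z)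
          calc (coordN N κ v * (e2 z * (e1 z * coordN N κ u))⁻¹)⁻¹
              = (e2 z * e1 z) * (coordN N κ u * (coordN N κ v)⁻¹) := by group
            _ = (e1 z * e2 z) * (coordN N κ u * (coordN N κ v)⁻¹) := by rw [hswap]
            _ = e1 z * e2 z * (coordN N κ v * (coordN N κ u)⁻¹)⁻¹ := by group
        rwa [heq] at hmem2
    exact hadj3'.symm
  exact reach3 hadj1 hadj2 hadj3 hu hv
lemma same_fiber_merge (hκ : ∀ q, π (κ q) = q)
    (hab : ∀ a b : G, a ∈ N → b ∈ N → a * b = b * a)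
    (hmin : ∀ K : Subgroup G, K.Normal → K ≤ N → K = ⊥ ∨ K = N)
    (hNbot : N ≠ ⊥)
    (hQnc : ∀ q : G ⧸ N, Subgroup.zpowers q ≠ ⊤)
    {u v : G} (hzuv : π u = π v)
    (hu : NonIsolated G 2 u) (hv : NonIsolated G 2 v) :
    (deltaGraph G 2).Reachable ⟨u, hu⟩ ⟨v, hv⟩ := by
  by_cases huv : u = v
  · have h : (⟨u, hu⟩ : {x : G // NonIsolated G 2 x}) = ⟨v, hv⟩ := Subtype.ext huv
    rw [h]
  obtain ⟨p, hp⟩ := id hu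
  obtain ⟨p', hp'⟩ := id hv
  have hclup : Subgroup.closure ({u, p} : Set G) = ⊤ := (adj_iff.mp hp).2
  have hclvp : Subgroup.closure ({v, p'} : Set G) = ⊤ := (adj_iff.mp hp').2
  have hqup : Subgroup.closure ({π u, π p} : Set (G ⧸ N)) = ⊤ := gen_to_quot N hclup
  have hqvp : Subgroup.closure ({π v, π p'} : Set (G ⧸ N)) = ⊤ := gen_to_quot N hclvp
  obtain ⟨hzx, hz1, hx1⟩ := pair_ne_of_noncyc N hQnc hqup
  obtain ⟨hzx', -, hx1'⟩ := pair_ne_of_noncyc N hQnc hqvp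
  -- notation
  set z : G ⧸ N := π u with hz_def
  have hπv : π v = z := hzuv.symm
  set xb : G ⧸ N := π p with hx_def
  -- donor over z?
  by_cases hfree : ∃ n ∈ N, ∀ d, IsCocycle N κ d → d z ≠ n
  · obtain ⟨n, hnN, hn⟩ := hfree
    set W : G := n * κ z with hW
    have hπW : π W = z := pi_sec_mul N κ hκ hnN z
    have hcW : coordN N κ W = n := coordN_sec_mul N κ hκ hnN z
    have hadjWp : (genGraph G 2).Adj W p := by
      refine adj_pkg N κ hκ hab hmin ?_ ?_ ?_
      · rw [hπW]; exact hzx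
      · rw [hπW]; exact hqup
      · rintro ⟨c, hc, hcWv, -⟩
        rw [hπW, hcW] at hcWv
        exact hn c hc hcWv
    have hadjWp' : (genGraph G 2).Adj W p' := by
      refine adj_pkg N κ hκ hab hmin ?_ ?_ ?_
      · rw [hπW, ← hπv]; exact hzx'
      · rw [hπW, ← hπv]; exact hqvp
      · rintro ⟨c, hc, hcWv, -⟩
        rw [hπW, hcW] at hcWv
        exact hn c hc hcWv
    exact reach4 hp hadjWp.symm hadjWp' hp'.symm ⟨p, hp⟩ ⟨p', hp'⟩
  push_neg at hfree
  have hontoz : OntoEv N κ z := fun n hn => hfree n hn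
  -- donor over x?
  by_cases hfreeX : ∃ n ∈ N, ∀ d, IsCocycle N κ d → d xb ≠ n
  · obtain ⟨n, hnN, hn⟩ := hfreeX
    set W : G := n * κ xb with hW
    have hπW : π W = xb := pi_sec_mul N κ hκ hnN xb
    have hcW : coordN N κ W = n := coordN_sec_mul N κ hκ hnN xb
    have hadjuW : (genGraph G 2).Adj u W := by
      refine adj_pkg N κ hκ hab hmin ?_ ?_ ?_
      · rw [hπW]; exact hzx
      · rw [hπW]; exact hqup
      · rintro ⟨c, hc, -, hcWv⟩
        rw [hπW, hcW] at hcWv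
        exact hn c hc hcWv
    have hadjvW : (genGraph G 2).Adj v W := by
      refine adj_pkg N κ hκ hab hmin ?_ ?_ ?_
      · rw [hπW, hπv]; exact hzx
      · rw [hπW, hπv]; exact hqup
      · rintro ⟨c, hc, -, hcWv⟩
        rw [hπW, hcW] at hcWv
        exact hn c hc hcWv
    exact reach2 hadjuW hadjvW.symm hu hv
  push_neg at hfreeX
  have hontoX : OntoEv N κ xb := fun n hn => hfreeX n hn
  -- the triangle vertex
  set wb : G ⧸ N := z * xb with hw_def
  have hgzw : Subgroup.closure ({z, wb} : Set (G ⧸ N)) = ⊤ := copair_left N hqup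
  have hgxw : Subgroup.closure ({xb, wb} : Set (G ⧸ N)) = ⊤ := copair_right N hqup
  obtain ⟨hzw, -, hw1⟩ := pair_ne_of_noncyc N hQnc hgzw
  obtain ⟨hxw, -, -⟩ := pair_ne_of_noncyc N hQnc hgxw
  -- donor over w?
  by_cases hfreeW : ∃ n ∈ N, ∀ d, IsCocycle N κ d → d wb ≠ n
  · obtain ⟨n, hnN, hn⟩ := hfreeW
    set W : G := n * κ wb with hW
    have hπW : π W = wb := pi_sec_mul N κ hκ hnN wb
    have hcW : coordN N κ W = n := coordN_sec_mul N κ hκ hnN wb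
    have hadjuW : (genGraph G 2).Adj u W := by
      refine adj_pkg N κ hκ hab hmin ?_ ?_ ?_
      · rw [hπW]; exact hzw
      · rw [hπW]; exact hgzw
      · rintro ⟨c, hc, -, hcWv⟩
        rw [hπW, hcW] at hcWv
        exact hn c hc hcWv
    have hadjvW : (genGraph G 2).Adj v W := by
      refine adj_pkg N κ hκ hab hmin ?_ ?_ ?_
      · rw [hπW, hπv]; exact hzw
      · rw [hπW, hπv]; exact hgzw
      · rintro ⟨c, hc, -, hcWv⟩
        rw [hπW, hcW] at hcWv
        exact hn c hc hcWv
    exact reach2 hadjuW hadjvW.symm hu hv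
  push_neg at hfreeW
  have hontoW : OntoEv N κ wb := fun n hn => hfreeW n hn
  -- propernesses
  have hgxz : Subgroup.closure ({xb, z} : Set (G ⧸ N)) = ⊤ := by
    rwa [Set.pair_comm]
  have hgwz : Subgroup.closure ({wb, z} : Set (G ⧸ N)) = ⊤ := by
    rw [Set.pair_comm]; exact hgzw
  have hgwx : Subgroup.closure ({wb, xb} : Set (G ⧸ N)) = ⊤ := by
    rw [Set.pair_comm]; exact hgxw
  have hPxz : ∃ n ∈ N, ¬ memU N κ xb z n :=
    exists_not_memU N κ hκ hab hNbot hclup hqup hontoz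
  have hPzx : ∃ n ∈ N, ¬ memU N κ z xb n :=
    exists_not_memU N κ hκ hab hNbot hclup hgxz hontoX
  have hPwx : ∃ n ∈ N, ¬ memU N κ wb xb n :=
    exists_not_memU N κ hκ hab hNbot hclup hgxw hontoX
  have hPxw : ∃ n ∈ N, ¬ memU N κ xb wb n :=
    exists_not_memU N κ hκ hab hNbot hclup hgwx hontoW
  have hPwz : ∃ n ∈ N, ¬ memU N κ wb z n :=
    exists_not_memU N κ hκ hab hNbot hclup hgzw hontoz
  have hPzw : ∃ n ∈ N, ¬ memU N κ z wb n :=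
    exists_not_memU N κ hκ hab hNbot hclup hgwz hontoW
  set τ : G := coordN N κ v * (coordN N κ u)⁻¹ with hτ
  have hτN : τ ∈ N := N.mul_mem (coordN_mem N κ hκ v) (N.inv_mem (coordN_mem N κ hκ u))
  by_cases hR0x : memU N κ z xb τ
  · exact common_nb N κ hκ hab hmin hqup hzx hontoz rfl hπv hR0x hPxz hu hv
  by_cases hR0w : memU N κ z wb τ
  · exact common_nb N κ hκ hab hmin hgzw hzw hontoz rfl hπv hR0w hPwz hu hv
  by_contra hnr
  -- the two pinning facts
  have F1 : ∀ e1 e2 : G ⧸ N → G, IsCocycle N κ e1 → IsCocycle N κ e2 →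
      ¬ memU N κ xb z (e1 xb) → ¬ memU N κ wb xb (e2 wb) →
      memU N κ z wb (e1 z * e2 z * τ⁻¹) := by
    intro e1 e2 he1 he2 ha1 ha2
    by_contra hmU
    exact hnr (route_path N κ hκ hab hmin hqup hgxw hgzw hzx hxw hzw hontoz rfl hπv hu hv
      he1 he2 ha1 ha2 hmU)
  have F2 : ∀ f1 f2 : G ⧸ N → G, IsCocycle N κ f1 → IsCocycle N κ f2 →
      ¬ memU N κ wb z (f1 wb) → ¬ memU N κ xb wb (f2 xb) →
      memU N κ z xb (f1 z * f2 z * τ⁻¹) := by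
    intro f1 f2 hf1 hf2 ha1 ha2
    by_contra hmU
    exact hnr (route_path N κ hκ hab hmin hgzw hgwx hqup hzw (Ne.symm hxw) hzx hontoz rfl hπv
      hu hv hf1 hf2 ha1 ha2 hmU)
  -- fixed admissibles
  obtain ⟨ξ0, hξ0N, hξ0⟩ := id hPxz
  obtain ⟨e10, he10, he10x⟩ := hontoX ξ0 hξ0N
  obtain ⟨ζ0, hζ0N, hζ0⟩ := id hPwx
  obtain ⟨e20, he20, he20w⟩ := hontoW ζ0 hζ0N
  have he10adm : ¬ memU N κ xb z (e10 xb) := by rwa [he10x]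
  have he20adm : ¬ memU N κ wb xb (e20 wb) := by rwa [he20w]
  -- (A) Uzx ⊆ Uzw
  have hAzw : ∀ m : G, memU N κ z xb m → memU N κ z wb m := by
    intro m hm
    obtain ⟨d0, hd0, hd0x, hd0z⟩ := hm
    have hadm' : ¬ memU N κ xb z ((fun q => d0 q * e10 q) xb) := by
      simp only
      rwa [hd0x, one_mul]
    have h1 := F1 _ _ (cocycle_mul N κ hab hd0 he10) he20 hadm' he20adm
    have h2 := F1 _ _ he10 he20 he10adm he20adm
    rw [hd0z] at h1
    have key : m = ((m * e10 z) * e20 z * τ⁻¹) * ((e10 z * e20 z * τ⁻¹))⁻¹ := by group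
    rw [key]
    exact memU_mul N κ hab h1 (memU_inv N κ hab h2)
  -- (B) Uzw ⊆ Uzx
  obtain ⟨ζ1, hζ1N, hζ1⟩ := id hPwz
  obtain ⟨f10, hf10, hf10w⟩ := hontoW ζ1 hζ1N
  obtain ⟨ξ1, hξ1N, hξ1⟩ := id hPxw
  obtain ⟨f20, hf20, hf20x⟩ := hontoX ξ1 hξ1N
  have hf10adm : ¬ memU N κ wb z (f10 wb) := by rwa [hf10w]
  have hf20adm : ¬ memU N κ xb wb (f20 xb) := by rwa [hf20x]
  have hAwz : ∀ m : G, memU N κ z wb m → memU N κ z xb m := by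
    intro m hm
    obtain ⟨d0, hd0, hd0w, hd0z⟩ := hm
    have hadm' : ¬ memU N κ wb z ((fun q => d0 q * f10 q) wb) := by
      simp only
      rwa [hd0w, one_mul]
    have h1 := F2 _ _ (cocycle_mul N κ hab hd0 hf10) hf20 hadm' hf20adm
    have h2 := F2 _ _ hf10 hf20 hf10adm hf20adm
    rw [hd0z] at h1
    have key : m = ((m * f10 z) * f20 z * τ⁻¹) * ((f10 z * f20 z * τ⁻¹))⁻¹ := by group
    rw [key]
    exact memU_mul N κ hab h1 (memU_inv N κ hab h2)
  -- (C) two-coset property of Uzw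
  have hD : ∀ ν : G, ν ∈ N → ¬ memU N κ z xb ν →
      memU N κ z wb (ν * (e20 z * τ⁻¹)) := by
    intro ν hνN hν
    obtain ⟨e, he, hez⟩ := hontoz ν hνN
    have hadm : ¬ memU N κ xb z (e xb) := by
      intro hmem
      apply hν
      have := (h1_iff N κ hab hqup he).mpr hmem
      rwa [hez] at this
    have := F1 _ _ he he20 hadm he20adm
    rw [hez] at this
    have key : ν * (e20 z * τ⁻¹) = ν * e20 z * τ⁻¹ := by group
    rwa [key]
  have hC : ∀ α β : G, α ∈ N → β ∈ N → ¬ memU N κ z wb α → ¬ memU N κ z wb β →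
      memU N κ z wb (α * β⁻¹) := by
    intro α β hαN hβN hα hβ
    have hαx : ¬ memU N κ z xb α := fun h => hα (hAzw α h)
    have hβx : ¬ memU N κ z xb β := fun h => hβ (hAzw β h)
    have h1 := hD α hαN hαx
    have h2 := hD β hβN hβx
    have key : α * β⁻¹ = (α * (e20 z * τ⁻¹)) * (β * (e20 z * τ⁻¹))⁻¹ := by group
    rw [key]
    exact memU_mul N κ hab h1 (memU_inv N κ hab h2)
  -- final contradiction
  have he10z : ¬ memU N κ z wb (e10 z) := by
    intro hmem
    have hzx' : memU N κ z xb (e10 z) := hAwz _ hmem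
    have := (h1_iff N κ hab hqup he10).mp hzx'
    rw [he10x] at this
    exact hξ0 this
  obtain ⟨ζ, hζN, hζx, hζz⟩ := exists_avoid_two N κ hab hPwx hPwz
  obtain ⟨e2, he2, he2w⟩ := hontoW ζ hζN
  have he2adm : ¬ memU N κ wb xb (e2 wb) := by rwa [he2w]
  have he2z : ¬ memU N κ z wb (e2 z) := by
    intro hmem
    have := (h1_iff N κ hab hgzw he2).mp hmem
    rw [he2w] at this
    exact hζz this
  have hKey := F1 _ _ he10 he2 he10adm he2adm
  have hprod : memU N κ z wb (e10 z * e2 z) := by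
    have hβ : ¬ memU N κ z wb (e2 z)⁻¹ := by
      intro h
      have := memU_inv N κ hab h
      rw [inv_inv] at this
      exact he2z this
    have := hC (e10 z) ((e2 z)⁻¹) (he10.1 z) (N.inv_mem (he2.1 z)) he10z hβ
    rwa [inv_inv] at this
  have : memU N κ z wb τ := by
    have h3 := memU_mul N κ hab (memU_inv N κ hab hprod) hKey
    have key : (e10 z * e2 z)⁻¹ * (e10 z * e2 z * τ⁻¹) = τ⁻¹ := by group
    rw [key] at h3
    have := memU_inv N κ hab h3
    rwa [inv_inv] at this
  exact hR0w this
lemma advance (hκ : ∀ q, π (κ q) = q)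
    (hab : ∀ a b : G, a ∈ N → b ∈ N → a * b = b * a)
    (hmin : ∀ K : Subgroup G, K.Normal → K ≤ N → K = ⊥ ∨ K = N)
    (hNbot : N ≠ ⊥)
    (hQnc : ∀ q : G ⧸ N, Subgroup.zpowers q ≠ ⊤)
    {X : G} (hX : NonIsolated G 2 X) {y : G ⧸ N}
    (hgen : Subgroup.closure ({π X, y} : Set (G ⧸ N)) = ⊤) (hne : π X ≠ y) :
    ∃ Y : G, π Y = y ∧ ∃ hY : NonIsolated G 2 Y,
      (deltaGraph G 2).Reachable ⟨X, hX⟩ ⟨Y, hY⟩ := by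
  by_cases hstuck : ∀ s ∈ N, ∃ d, IsCocycle N κ d ∧ d (π X) = coordN N κ X ∧ d y = s
  · -- stuck towards y; use a donor over π X
    obtain ⟨P, hP⟩ := id hX
    have hclXP : Subgroup.closure ({X, P} : Set G) = ⊤ := (adj_iff.mp hP).2
    have hqXP : Subgroup.closure ({π X, π P} : Set (G ⧸ N)) = ⊤ := gen_to_quot N hclXP
    obtain ⟨hzP, -, -⟩ := pair_ne_of_noncyc N hQnc hqXP
    have hfull : ∀ n ∈ N, memU N κ y (π X) n := by
      intro n hn
      obtain ⟨da, hda, hdaz, hday⟩ := hstuck n hn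
      obtain ⟨db, hdb, hdbz, hdby⟩ := hstuck 1 N.one_mem
      refine ⟨fun q => da q * (db q)⁻¹,
        cocycle_mul N κ hab hda (cocycle_inv N κ hab hdb), ?_, ?_⟩
      · simp only; rw [hdaz, hdbz]; group
      · simp only; rw [hday, hdby]; group
    by_cases honto : OntoEv N κ (π X)
    · exfalso
      obtain ⟨n, hn, hnot⟩ := exists_not_memU N κ hκ hab hNbot hclXP hgen honto
      exact hnot (hfull n hn)
    · have hfree : ∃ n ∈ N, ∀ d, IsCocycle N κ d → d (π X) ≠ n := by
        by_contra hcon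
        push_neg at hcon
        exact honto (fun n hn => hcon n hn)
      obtain ⟨n0, hn0N, hn0⟩ := hfree
      set W : G := n0 * κ (π X) with hW
      have hπW : π W = π X := pi_sec_mul N κ hκ hn0N (π X)
      have hcW : coordN N κ W = n0 := coordN_sec_mul N κ hκ hn0N (π X)
      set Y : G := κ y with hY
      have hπY : π Y = y := hκ y
      have hadjPW : (genGraph G 2).Adj P W := by
        refine ((adj_pkg N κ hκ hab hmin ?_ ?_ ?_ : (genGraph G 2).Adj W P)).symm
        · rw [hπW]; exact hzP
        · rw [hπW]; exact hqXP
        · rintro ⟨c, hc, hcW', -⟩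
          rw [hπW, hcW] at hcW'
          exact hn0 c hc hcW'
      have hadjWY : (genGraph G 2).Adj W Y := by
        refine adj_pkg N κ hκ hab hmin ?_ ?_ ?_
        · rw [hπW, hπY]; exact hne
        · rw [hπW, hπY]; exact hgen
        · rintro ⟨c, hc, hcW', -⟩
          rw [hπW, hcW] at hcW'
          exact hn0 c hc hcW'
      exact ⟨Y, hπY, ⟨W, hadjWY.symm⟩, reach3 hP hadjPW hadjWY hX ⟨W, hadjWY.symm⟩⟩
  · push_neg at hstuck
    obtain ⟨s, hsN, hs⟩ := hstuck
    set Y : G := s * κ y with hYdef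
    have hπY : π Y = y := pi_sec_mul N κ hκ hsN y
    have hcY : coordN N κ Y = s := coordN_sec_mul N κ hκ hsN y
    have hadj : (genGraph G 2).Adj X Y := by
      refine adj_pkg N κ hκ hab hmin ?_ ?_ ?_
      · rw [hπY]; exact hne
      · rw [hπY]; exact hgen
      · rintro ⟨c, hc, hcX, hcY'⟩
        rw [hπY, hcY] at hcY'
        exact hs c hc hcX hcY'
    exact ⟨Y, hπY, ⟨X, hadj.symm⟩, delta_reach_of_adj hadj⟩

lemma walk_lift_s9 (hκ : ∀ q, π (κ q) = q)
    (hab : ∀ a b : G, a ∈ N → b ∈ N → a * b = b * a)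
    (hmin : ∀ K : Subgroup G, K.Normal → K ≤ N → K = ⊥ ∨ K = N)
    (hNbot : N ≠ ⊥)
    (hQnc : ∀ q : G ⧸ N, Subgroup.zpowers q ≠ ⊤)
    {q1 q2 : {x : G ⧸ N // NonIsolated (G ⧸ N) 2 x}}
    (w : (deltaGraph (G ⧸ N) 2).Walk q1 q2) :
    ∀ (X : G) (hX : NonIsolated G 2 X), π X = q1.1 →
      ∃ Y : G, π Y = q2.1 ∧ ∃ hY : NonIsolated G 2 Y,
        (deltaGraph G 2).Reachable ⟨X, hX⟩ ⟨Y, hY⟩ := by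
  induction w with
  | nil =>
    intro X hX hq
    exact ⟨X, hq, hX, by rfl⟩
  | cons h w ih =>
    rename_i a b c
    intro X hX hq
    have hadj : (genGraph (G ⧸ N) 2).Adj a.1 b.1 := h
    have h2 := (adj_iff.mp hadj).2
    have h1 := (adj_iff.mp hadj).1
    obtain ⟨Y1, hπY1, hY1, hr1⟩ := advance N κ hκ hab hmin hNbot hQnc hX
      (by rw [hq]; exact h2) (by rw [hq]; exact h1)
    obtain ⟨Y, hπY, hY, hr2⟩ := ih Y1 hY1 hπY1
    exact ⟨Y, hπY, hY, hr1.trans hr2⟩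

lemma coordN_of_memN (hκ : ∀ q, π (κ q) = q) {m : G} (hm : m ∈ N) : coordN N κ m = m := by
  rw [coordN, (mem_N_iff N m).mp hm, map_one]
  group

lemma case3_noncyclic (hκ : ∀ q, π (κ q) = q)
    (hab : ∀ a b : G, a ∈ N → b ∈ N → a * b = b * a)
    (hmin : ∀ K : Subgroup G, K.Normal → K ≤ N → K = ⊥ ∨ K = N)
    (hNbot : N ≠ ⊥)
    (hQnc : ∀ q : G ⧸ N, Subgroup.zpowers q ≠ ⊤)
    (hpre : (deltaGraph (G ⧸ N) 2).Preconnected) :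
    (deltaGraph G 2).Preconnected := by
  rintro ⟨u, hu⟩ ⟨v, hv⟩
  obtain ⟨p, hp⟩ := id hu
  obtain ⟨p', hp'⟩ := id hv
  have hclup : Subgroup.closure ({u, p} : Set G) = ⊤ := (adj_iff.mp hp).2
  have hclvp : Subgroup.closure ({v, p'} : Set G) = ⊤ := (adj_iff.mp hp').2
  have hqup : Subgroup.closure ({π u, π p} : Set (G ⧸ N)) = ⊤ := gen_to_quot N hclup
  have hqvp : Subgroup.closure ({π v, π p'} : Set (G ⧸ N)) = ⊤ := gen_to_quot N hclvp
  obtain ⟨hne1, -, -⟩ := pair_ne_of_noncyc N hQnc hqup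
  obtain ⟨hne2, -, -⟩ := pair_ne_of_noncyc N hQnc hqvp
  have hqu : NonIsolated (G ⧸ N) 2 (π u) := ⟨π p, adj_of_gen hne1 hqup⟩
  have hqv : NonIsolated (G ⧸ N) 2 (π v) := ⟨π p', adj_of_gen hne2 hqvp⟩
  obtain ⟨w⟩ := hpre ⟨π u, hqu⟩ ⟨π v, hqv⟩
  obtain ⟨X, hπX, hX, hr⟩ := walk_lift_s9 N κ hκ hab hmin hNbot hQnc w u hu rfl
  have hr2 := same_fiber_merge N κ hκ hab hmin hNbot hQnc (hπX : π X = π v) hX hv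
  exact hr.trans hr2

lemma case3_cyclic (hκ : ∀ q, π (κ q) = q)
    (hab : ∀ a b : G, a ∈ N → b ∈ N → a * b = b * a)
    (hmin : ∀ K : Subgroup G, K.Normal → K ≤ N → K = ⊥ ∨ K = N)
    (hNbot : N ≠ ⊥) (hNtop : N ≠ ⊤)
    (hGnc : ∀ g : G, Subgroup.zpowers g ≠ ⊤)
    (gq : G ⧸ N) (hgq : Subgroup.zpowers gq = ⊤) :
    (deltaGraph G 2).Preconnected := by
  -- Ḡ is nontrivial
  have hQnt : gq ≠ 1 := by
    intro h
    apply hNtop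
    rw [eq_top_iff]
    intro g _
    rw [mem_N_iff]
    have : π g ∈ Subgroup.zpowers gq := by rw [hgq]; trivial
    rw [h] at this
    obtain ⟨k, hk⟩ := this
    simpa using hk.symm
  have hgq' : ∀ y : G ⧸ N, y ∈ Subgroup.zpowers gq := by
    intro y; rw [hgq]; trivial
  -- gq pair closures
  have hpair_top : ∀ x : G ⧸ N, Subgroup.closure ({x, gq} : Set (G ⧸ N)) = ⊤ := by
    intro x
    rw [Set.pair_comm]
    exact closure_pair_top_left hgq'
  -- donor
  obtain ⟨m, hmN, hm1⟩ : ∃ m ∈ N, m ≠ 1 := by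
    by_contra hc
    push_neg at hc
    apply hNbot
    rw [eq_bot_iff]
    intro x hx
    simp [Subgroup.mem_bot, hc x hx]
  have donor_adj : ∀ m' : G, m' ∈ N → m' ≠ 1 → ∀ L : G, π L = gq →
      (genGraph G 2).Adj m' L := by
    intro m' hm'N hm'1 L hL
    refine adj_pkg N κ hκ hab hmin ?_ ?_ ?_
    · rw [hL, (mem_N_iff N m').mp hm'N]
      exact Ne.symm hQnt
    · rw [hL, (mem_N_iff N m').mp hm'N]
      exact hpair_top 1
    · rintro ⟨c, hc, hcm, -⟩
      rw [(mem_N_iff N m').mp hm'N, coordN_of_memN N κ hκ hm'N] at hcm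
      rw [cocycle_one N κ hc] at hcm
      exact hm'1 hcm.symm
  set Ygen : G := κ gq with hYgen
  have hπYgen : π Ygen = gq := hκ gq
  have hmNI : NonIsolated G 2 m := ⟨Ygen, donor_adj m hmN hm1 Ygen hπYgen⟩
  -- key: every vertex connects to m
  have key : ∀ (a : G) (ha : NonIsolated G 2 a),
      (deltaGraph G 2).Reachable ⟨a, ha⟩ ⟨m, hmNI⟩ := by
    intro a ha
    obtain ⟨b, hb⟩ := id ha
    have hcl : Subgroup.closure ({a, b} : Set G) = ⊤ := (adj_iff.mp hb).2
    by_cases hga : Subgroup.zpowers (π a) = ⊤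
    · -- π a generates: m adjacent a directly
      have hadj : (genGraph G 2).Adj m a := by
        refine adj_pkg N κ hκ hab hmin ?_ ?_ ?_
        · rw [(mem_N_iff N m).mp hmN]
          intro h
          apply hNtop
          rw [eq_top_iff]
          intro g _
          rw [mem_N_iff]
          have : π g ∈ Subgroup.zpowers (π a) := by rw [hga]; trivial
          rw [← h] at this
          obtain ⟨k, hk⟩ := this
          simpa using hk.symm
        · rw [(mem_N_iff N m).mp hmN, Set.pair_comm]
          exact closure_pair_top_left (fun y => by rw [hga]; trivial)
        · rintro ⟨c, hc, hcm, -⟩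
          rw [(mem_N_iff N m).mp hmN, coordN_of_memN N κ hκ hmN,
            cocycle_one N κ hc] at hcm
          exact hm1 hcm.symm
      exact (delta_reach_of_adj (x := ⟨m, hmNI⟩) (y := ⟨a, ha⟩) hadj).symm
    by_cases ha1 : π a = 1
    · -- a is itself in N \ {1}
      have haN : a ∈ N := (mem_N_iff N a).mpr ha1
      have ha1' : a ≠ 1 := by
        rintro rfl
        apply hGnc b
        rw [eq_top_iff, ← hcl, Subgroup.closure_le]
        rintro y (rfl | hy)
        · exact Subgroup.one_mem _
        · simp only [Set.mem_singleton_iff] at hy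
          exact hy ▸ Subgroup.mem_zpowers _
      exact reach2 (donor_adj a haN ha1' Ygen hπYgen)
        (donor_adj m hmN hm1 Ygen hπYgen).symm ha hmNI
    · -- middle case
      have hagq : π a ≠ gq := by
        intro h; exact hga (h ▸ hgq)
      have hgen_ag : Subgroup.closure ({π a, gq} : Set (G ⧸ N)) = ⊤ := hpair_top (π a)
      by_cases hstuck : ∀ s ∈ N, ∃ d, IsCocycle N κ d ∧ d (π a) = coordN N κ a ∧ d gq = s
      · -- stuck: need a donor over π a
        have hfull : ∀ n ∈ N, memU N κ gq (π a) n := by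
          intro n hn
          obtain ⟨da, hda, hdaz, hday⟩ := hstuck n hn
          obtain ⟨db, hdb, hdbz, hdby⟩ := hstuck 1 N.one_mem
          refine ⟨fun q => da q * (db q)⁻¹,
            cocycle_mul N κ hab hda (cocycle_inv N κ hab hdb), ?_, ?_⟩
          · simp only; rw [hdaz, hdbz]; group
          · simp only; rw [hday, hdby]; group
        by_cases honto : OntoEv N κ (π a)
        · exfalso
          obtain ⟨n, hn, hnot⟩ := exists_not_memU N κ hκ hab hNbot hcl hgen_ag honto
          exact hnot (hfull n hn)
        · have hfree : ∃ n ∈ N, ∀ d, IsCocycle N κ d → d (π a) ≠ n := by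
            by_contra hcon
            push_neg at hcon
            exact honto (fun n hn => hcon n hn)
          obtain ⟨n0, hn0N, hn0⟩ := hfree
          set W : G := n0 * κ (π a) with hW
          have hπW : π W = π a := pi_sec_mul N κ hκ hn0N (π a)
          have hcW : coordN N κ W = n0 := coordN_sec_mul N κ hκ hn0N (π a)
          have hab_ne : π a ≠ π b := by
            intro h
            apply hga
            have hq := gen_to_quot N hcl
            rw [← h] at hq
            rw [eq_top_iff, ← hq, Subgroup.closure_le]
            rintro y (rfl | hy)
            · exact Subgroup.mem_zpowers _
            · simp only [Set.mem_singleton_iff] at hy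
              exact hy ▸ Subgroup.mem_zpowers _
          have hadjbW : (genGraph G 2).Adj b W := by
            refine ((adj_pkg N κ hκ hab hmin ?_ ?_ ?_ : (genGraph G 2).Adj W b)).symm
            · rw [hπW]; exact hab_ne
            · rw [hπW]; exact gen_to_quot N hcl
            · rintro ⟨c, hc, hcW', -⟩
              rw [hπW, hcW] at hcW'
              exact hn0 c hc hcW'
          have hadjWY : (genGraph G 2).Adj W Ygen := by
            refine adj_pkg N κ hκ hab hmin ?_ ?_ ?_
            · rw [hπW, hπYgen]; exact hagq
            · rw [hπW, hπYgen]; exact hgen_ag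
            · rintro ⟨c, hc, hcW', -⟩
              rw [hπW, hcW] at hcW'
              exact hn0 c hc hcW'
          have hadjYm : (genGraph G 2).Adj Ygen m :=
            (donor_adj m hmN hm1 Ygen hπYgen).symm
          exact reach4 hb hadjbW hadjWY hadjYm ha hmNI
      · push_neg at hstuck
        obtain ⟨s, hsN, hs⟩ := hstuck
        set X : G := s * κ gq with hX
        have hπX : π X = gq := pi_sec_mul N κ hκ hsN gq
        have hcX : coordN N κ X = s := coordN_sec_mul N κ hκ hsN gq
        have hadjaX : (genGraph G 2).Adj a X := by
          refine adj_pkg N κ hκ hab hmin ?_ ?_ ?_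
          · rw [hπX]; exact hagq
          · rw [hπX]; exact hgen_ag
          · rintro ⟨c, hc, hca, hcX'⟩
            rw [hπX, hcX] at hcX'
            exact hs c hc hca hcX'
        have hadjXm : (genGraph G 2).Adj X m :=
          (donor_adj m hmN hm1 X hπX).symm
        exact reach2 hadjaX hadjXm ha hmNI
  rintro ⟨u, hu⟩ ⟨v, hv⟩
  exact (key u hu).trans (key v hv).symm
end Merge2

lemma N_ne_top (hab : ∀ a b : G, a ∈ N → b ∈ N → a * b = b * a)
    (hmin : ∀ K : Subgroup G, K.Normal → K ≤ N → K = ⊥ ∨ K = N)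
    (hGnc : ∀ g : G, Subgroup.zpowers g ≠ ⊤) : N ≠ ⊤ := by
  intro hNtop
  -- G is nontrivial
  obtain ⟨g, hg1⟩ : ∃ g : G, g ≠ 1 := by
    by_contra hc
    push_neg at hc
    apply hGnc 1
    rw [eq_top_iff]
    intro x _
    rw [hc x]
    exact Subgroup.one_mem _
  have hcomm : ∀ a b : G, a * b = b * a := by
    intro a b
    exact hab a b (hNtop ▸ trivial) (hNtop ▸ trivial)
  have hzn : (Subgroup.zpowers g).Normal := by
    constructor
    intro x hx h
    have : h * x * h⁻¹ = x := by
      rw [hcomm h x]; group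
    rwa [this]
  rcases hmin _ hzn (hNtop ▸ le_top) with h0 | h1
  · apply hg1
    have : g ∈ Subgroup.zpowers g := Subgroup.mem_zpowers g
    rw [h0] at this
    simpa using this
  · exact hGnc g (h1.trans hNtop)

lemma case2 (hab : ∀ a b : G, a ∈ N → b ∈ N → a * b = b * a)
    (hmin : ∀ K : Subgroup G, K.Normal → K ≤ N → K = ⊥ ∨ K = N)
    (hnocomp : ¬ ∃ K : Subgroup G, K ⊓ N = ⊥ ∧ K ⊔ N = ⊤)
    (hpre : (deltaGraph (G ⧸ N) 2).Preconnected) :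
    (deltaGraph G 2).Preconnected := by
  have full : ∀ g h : G, Subgroup.closure ({π g, π h} : Set (G ⧸ N)) = ⊤ →
      Subgroup.closure ({g, h} : Set G) = ⊤ := by
    intro g h hq
    have hsup : Subgroup.closure ({g, h} : Set G) ⊔ N = ⊤ := (gen_quot_iff N g h).mp hq
    rcases dichotomy N hab hmin _ hsup with ht | hinf
    · exact ht
    · exact absurd ⟨_, hinf, hsup⟩ hnocomp
  by_cases hQcyc : ∃ gq : G ⧸ N, Subgroup.zpowers gq = ⊤
  · -- hub case
    obtain ⟨gq, hgq⟩ := hQcyc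
    obtain ⟨g0, hg0⟩ := QuotientGroup.mk'_surjective N gq
    have hgq' : ∀ y : G ⧸ N, y ∈ Subgroup.zpowers gq := fun y => by rw [hgq]; trivial
    have hub : ∀ x : G, x ≠ g0 → (genGraph G 2).Adj g0 x := by
      intro x hx
      refine adj_of_gen (fun e => hx e.symm) (full g0 x ?_)
      rw [hg0]
      exact closure_pair_top_left hgq'
    rintro ⟨u, hu⟩ ⟨v, hv⟩
    by_cases huv : u = v
    · have h : (⟨u, hu⟩ : {x : G // NonIsolated G 2 x}) = ⟨v, hv⟩ := Subtype.ext huv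
      rw [h]
    by_cases hu0 : u = g0
    · subst hu0
      exact delta_reach_of_adj (hub v (fun e => huv e.symm))
    by_cases hv0 : v = g0
    · subst hv0
      exact (delta_reach_of_adj (x := ⟨v, hv⟩) (y := ⟨u, hu⟩) (hub u huv)).symm
    · exact reach2 (hub u hu0).symm (hub v hv0) hu hv
  · push_neg at hQcyc
    have hQnc : ∀ q : G ⧸ N, Subgroup.zpowers q ≠ ⊤ := hQcyc
    rintro ⟨u, hu⟩ ⟨v, hv⟩
    obtain ⟨p, hp⟩ := id hu
    obtain ⟨p', hp'⟩ := id hv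
    have hclup : Subgroup.closure ({u, p} : Set G) = ⊤ := (adj_iff.mp hp).2
    have hclvp : Subgroup.closure ({v, p'} : Set G) = ⊤ := (adj_iff.mp hp').2
    have hqup : Subgroup.closure ({π u, π p} : Set (G ⧸ N)) = ⊤ := gen_to_quot N hclup
    have hqvp : Subgroup.closure ({π v, π p'} : Set (G ⧸ N)) = ⊤ := gen_to_quot N hclvp
    obtain ⟨hne1, -, -⟩ := pair_ne_of_noncyc N hQnc hqup
    obtain ⟨hne2, -, -⟩ := pair_ne_of_noncyc N hQnc hqvp
    have hqu : NonIsolated (G ⧸ N) 2 (π u) := ⟨π p, adj_of_gen hne1 hqup⟩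
    have hqv : NonIsolated (G ⧸ N) 2 (π v) := ⟨π p', adj_of_gen hne2 hqvp⟩
    obtain ⟨w⟩ := hpre ⟨π u, hqu⟩ ⟨π v, hqv⟩
    -- lift the walk
    have lift : ∀ (q1 q2 : {x : G ⧸ N // NonIsolated (G ⧸ N) 2 x})
        (w : (deltaGraph (G ⧸ N) 2).Walk q1 q2) (X : G) (hX : NonIsolated G 2 X),
        π X = q1.1 → ∃ Y : G, π Y = q2.1 ∧ ∃ hY : NonIsolated G 2 Y,
          (deltaGraph G 2).Reachable ⟨X, hX⟩ ⟨Y, hY⟩ := by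
      intro q1 q2 w
      induction w with
      | nil =>
        intro X hX hq
        exact ⟨X, hq, hX, by rfl⟩
      | cons h w ih =>
        rename_i a b c
        intro X hX hq
        have hadj : (genGraph (G ⧸ N) 2).Adj a.1 b.1 := h
        obtain ⟨Y1, hY1⟩ := QuotientGroup.mk'_surjective N b.1
        have hXY : (genGraph G 2).Adj X Y1 := by
          refine adj_of_gen ?_ (full X Y1 ?_)
          · intro e
            apply (adj_iff.mp hadj).1
            rw [← hq, ← hY1, e]
          · rw [hq, hY1]
            exact (adj_iff.mp hadj).2
        obtain ⟨Y, hπY, hY, hr2⟩ := ih Y1 ⟨X, hXY.symm⟩ hY1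
        exact ⟨Y, hπY, hY, (delta_reach_of_adj hXY).trans hr2⟩
    obtain ⟨X, hπX0, hX, hr⟩ := lift _ _ w u hu rfl
    have hπX : π X = π v := hπX0
    by_cases hXv : X = v
    · subst hXv
      exact hr.trans (by rfl)
    · have hadj1 : (genGraph G 2).Adj X p' := by
        refine adj_of_gen ?_ (full X p' ?_)
        · intro e
          apply hne2
          rw [← hπX, e]
        · rw [hπX]
          exact hqvp
      exact hr.trans (reach2 hadj1 hp'.symm hX hv)

lemma subgroup_eq_of_le_of_card_le {K K' : Subgroup G} (h : K ≤ K')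
    (hc : Nat.card K' ≤ Nat.card K) : K = K' := by
  have h1 : (K : Set G) ⊆ (K' : Set G) := h
  have h2 : (K' : Set G).ncard ≤ (K : Set G).ncard := by
    rwa [← Nat.card_coe_set_eq, ← Nat.card_coe_set_eq]
  exact SetLike.ext' (Set.eq_of_subset_of_ncard_le h1 h2 (Set.toFinite _))

lemma lifting (hNbot : N ≠ ⊥)
    (hab : ∀ a b : G, a ∈ N → b ∈ N → a * b = b * a)
    (hmin : ∀ K : Subgroup G, K.Normal → K ≤ N → K = ⊥ ∨ K = N)
    (hpre : (deltaGraph (G ⧸ N) 2).Preconnected) :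
    (deltaGraph G 2).Preconnected := by
  by_cases hGcyc : ∃ g : G, Subgroup.zpowers g = ⊤
  · obtain ⟨g, hg⟩ := hGcyc
    haveI : IsCyclic G := ⟨⟨g, fun x => (Subgroup.eq_top_iff' _).mp hg x⟩⟩
    exact cyclic_preconnected
  push_neg at hGcyc
  have hNtop := N_ne_top N hab hmin hGcyc
  by_cases hcomp : ∃ K : Subgroup G, K ⊓ N = ⊥ ∧ K ⊔ N = ⊤
  · obtain ⟨K, h1, h2⟩ := hcomp
    obtain ⟨κ, hκ, -⟩ := exists_sec_of_comp N K h1 h2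
    by_cases hQcyc : ∃ gq : G ⧸ N, Subgroup.zpowers gq = ⊤
    · obtain ⟨gq, hgq⟩ := hQcyc
      exact case3_cyclic N κ hκ hab hmin hNbot hNtop hGcyc gq hgq
    · push_neg at hQcyc
      exact case3_noncyclic N κ hκ hab hmin hNbot hQcyc hpre
  · exact case2 N hab hmin hcomp hpre
end Merge
end Lift

lemma backward_aux
    (h : ∀ (G : Type) [Group G] [Finite G],
      (∀ N : Subgroup G, N.Normal → IsSolvable N → N = ⊥) →
      (deltaGraph G 2).Preconnected) :
    ∀ (n : ℕ) (G : Type) [Group G] [Finite G], Nat.card G ≤ n →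
      (deltaGraph G 2).Preconnected := by
  intro n
  induction n with
  | zero =>
    intro G _ _ hc
    have : 0 < Nat.card G := Nat.card_pos
    omega
  | succ n ih =>
    intro G _ _ hc
    by_cases hrad : ∀ N : Subgroup G, N.Normal → IsSolvable N → N = ⊥
    · exact h G hrad
    push_neg at hrad
    obtain ⟨N1, hn1, hs1, hb1⟩ := hrad
    -- choose a minimal nontrivial soluble normal subgroup by cardinality
    set S : Set (Subgroup G) := {K | K ≠ ⊥ ∧ K.Normal ∧ IsSolvable K} with hS_def
    have hN1S : N1 ∈ S := ⟨hb1, hn1, hs1⟩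
    have hcne : ((fun K : Subgroup G => Nat.card K) '' S).Nonempty := ⟨_, ⟨N1, hN1S, rfl⟩⟩
    obtain ⟨K0, hK0S, hK0card⟩ := Nat.sInf_mem hcne
    have hK0card' : Nat.card K0 = sInf ((fun K : Subgroup G => Nat.card K) '' S) := hK0card
    have hK0min : ∀ K ∈ S, Nat.card K0 ≤ Nat.card K := by
      intro K hK
      rw [hK0card']
      exact Nat.sInf_le ⟨K, hK, rfl⟩
    obtain ⟨hK0bot, hK0n, hK0sol⟩ := hK0S
    haveI := hK0n
    haveI : Group.IsSolvable K0 := hK0sol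
    have hmin : ∀ K : Subgroup G, K.Normal → K ≤ K0 → K = ⊥ ∨ K = K0 := by
      intro K hKn hKle
      by_cases hKbot : K = ⊥
      · exact Or.inl hKbot
      · right
        have hKsol : IsSolvable K :=
          solvable_of_solvable_injective (Subgroup.inclusion_injective hKle)
        exact subgroup_eq_of_le_of_card_le hKle (hK0min K ⟨hKbot, hKn, hKsol⟩)
    -- K0 is abelian
    have hM0 : (⁅K0, K0⁆ : Subgroup G) = ⊥ := by
      have hMle : (⁅K0, K0⁆ : Subgroup G) ≤ K0 := Subgroup.commutator_le_left K0 K0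
      have hMnormal : (⁅K0, K0⁆ : Subgroup G).Normal := Subgroup.commutator_normal K0 K0
      rcases hmin _ hMnormal hMle with h0 | h1
      · exact h0
      · exfalso
        obtain ⟨nn, hnn⟩ := hK0sol.solvable
        have hmap : ∀ k, Subgroup.map K0.subtype (derivedSeries (↥K0) k) = K0 := by
          intro k
          induction k with
          | zero =>
            rw [derivedSeries_zero, ← MonoidHom.range_eq_map, Subgroup.range_subtype]
          | succ k ihk =>
            rw [derivedSeries_succ, Subgroup.map_commutator, ihk]
            exact h1
        have hcontr := hmap nn
        rw [hnn] at hcontr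
        simp only [Subgroup.map_bot] at hcontr
        exact hK0bot hcontr.symm
    have hab : ∀ a b : G, a ∈ K0 → b ∈ K0 → a * b = b * a := by
      intro a b ha hb
      open scoped commutatorElement in have : ⁅a, b⁆ ∈ (⁅K0, K0⁆ : Subgroup G) := Subgroup.commutator_mem_commutator ha hb
      rw [hM0] at this
      exact commutatorElement_eq_one_iff_mul_comm.mp (by simpa using this)
    -- the quotient is smaller
    have hcard : Nat.card (G ⧸ K0) ≤ n := by
      have heq : Nat.card G = Nat.card (G ⧸ K0) * Nat.card K0 :=
        Subgroup.card_eq_card_quotient_mul_card_subgroup K0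
      have h2 : 1 < Nat.card K0 := (Subgroup.one_lt_card_iff_ne_bot K0).mpr hK0bot
      have h3 : 0 < Nat.card (G ⧸ K0) := Nat.card_pos
      have : Nat.card (G ⧸ K0) < Nat.card G := by
        rw [heq]
        have h4 : Nat.card (G ⧸ K0) * 1 < Nat.card (G ⧸ K0) * Nat.card K0 :=
          mul_lt_mul_of_pos_left h2 h3
        simpa using h4
      omega
    have hpre := ih (G ⧸ K0) hcard
    exact lifting K0 hK0bot hab hmin hpre


theorem stmt9 :
    (∀ (G : Type) [Group G] [Finite G], (deltaGraph G 2).Preconnected) ↔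
    (∀ (G : Type) [Group G] [Finite G],
      (∀ N : Subgroup G, N.Normal → IsSolvable N → N = ⊥) →
      (deltaGraph G 2).Preconnected) := by
  constructor
  · intro h G _ _ _
    exact h G
  · intro h G _ _
    exact backward_aux h (Nat.card G) G le_rfl
end
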